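/- arXiv:1611.07354 — 2 statements merged into one kernel-verified Lean document; each statement's English description precedes it below -/
import Mathlib

section
/- For every integer d ≥ 2, every dual graph of type (d, d+6) has diameter at most 14; that is, μ(d, d+6) ≤ 14. -/
open SimpleGraph

/-- The graph on a family `V` of subsets of `{1,…,n}` in which two distinct
members are adjacent iff their intersection has `d - 1` elements
(property (ii) of a dual graph of type `(d,n)`). -/
def adjGraph (n d : ℕ) (V : Finset (Finset (Fin n))) :
    SimpleGraph {u : Finset (Fin n) // u ∈ V} where
  Adj u v := u ≠ v ∧ (u.1 ∩ v.1).card = d - 1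
  symm := by
    constructor
    rintro u v ⟨h1, h2⟩
    exact ⟨h1.symm, by rwa [Finset.inter_comm]⟩
  loopless := ⟨fun u h => h.1 rfl⟩

/-- `V` is (the vertex set of) a dual graph of type `(d,n)`:
a nonempty family of `d`-element subsets of `{1,…,n}` such that, with adjacency
given by property (ii), any two vertices `u`, `v` are joined by a walk all of
whose vertices contain `u ∩ v` (property (i)). -/
structure IsDualGraph (d n : ℕ) (V : Finset (Finset (Fin n))) : Prop where
  nonempty : V.Nonempty
  card_eq : ∀ u ∈ V, u.card = d
  locally_connected : ∀ u v : {x : Finset (Fin n) // x ∈ V},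
    ∃ w : (adjGraph n d V).Walk u v, ∀ x ∈ w.support, u.1 ∩ v.1 ⊆ x.1

namespace DualProof
open Finset

variable {n d : ℕ} {V : Finset (Finset (Fin n))}

abbrev Vt (V : Finset (Finset (Fin n))) := {u : Finset (Fin n) // u ∈ V}

/-- There is a walk from `x` to `y` of length at most `L` all of whose vertices contain `w`. -/
def SW (d : ℕ) (w : Finset (Fin n)) (x y : Vt V) (L : ℕ) : Prop :=
  ∃ p : (adjGraph n d V).Walk x y, p.length ≤ L ∧ ∀ z ∈ p.support, w ⊆ z.1

namespace SW

lemma refl (d : ℕ) {w : Finset (Fin n)} {x : Vt V} (hw : w ⊆ x.1) (L : ℕ) :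
    SW d w x x L := by
  refine ⟨Walk.nil, by simp, ?_⟩
  intro z hz
  simp only [Walk.support_nil, List.mem_singleton] at hz
  subst hz; exact hw

lemma symm {d : ℕ} {w : Finset (Fin n)} {x y : Vt V} {L : ℕ} (h : SW d w x y L) :
    SW d w y x L := by
  obtain ⟨p, hl, hs⟩ := h
  exact ⟨p.reverse, by simpa using hl, fun z hz => hs z (by simpa using hz)⟩

lemma trans {d : ℕ} {w : Finset (Fin n)} {x y z : Vt V} {L M : ℕ}
    (h1 : SW d w x y L) (h2 : SW d w y z M) : SW d w x z (L + M) := by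
  obtain ⟨p, hl, hs⟩ := h1
  obtain ⟨q, hl', hs'⟩ := h2
  refine ⟨p.append q, by simp [Walk.length_append]; omega, ?_⟩
  intro t ht
  rcases (Walk.mem_support_append_iff _ _).1 ht with h | h
  · exact hs t h
  · exact hs' t h

lemma mono_len {d : ℕ} {w : Finset (Fin n)} {x y : Vt V} {L M : ℕ}
    (h : SW d w x y L) (hLM : L ≤ M) : SW d w x y M := by
  obtain ⟨p, hl, hs⟩ := h
  exact ⟨p, hl.trans hLM, hs⟩

lemma mono_w {d : ℕ} {w w' : Finset (Fin n)} {x y : Vt V} {L : ℕ}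
    (h : SW d w x y L) (hw : w' ⊆ w) : SW d w' x y L := by
  obtain ⟨p, hl, hs⟩ := h
  exact ⟨p, hl, fun z hz => hw.trans (hs z hz)⟩

lemma of_adj {d : ℕ} {w : Finset (Fin n)} {x y : Vt V}
    (hxy : x ≠ y) (hcard : (x.1 ∩ y.1).card = d - 1)
    (hwx : w ⊆ x.1) (hwy : w ⊆ y.1) : SW d w x y 1 := by
  refine ⟨Walk.cons (show (adjGraph n d V).Adj x y from ⟨hxy, hcard⟩) Walk.nil, by simp, ?_⟩
  intro z hz
  simp only [Walk.support_cons, Walk.support_nil, List.mem_cons, List.mem_singleton,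
    List.not_mem_nil, or_false] at hz
  rcases hz with rfl | rfl <;> assumption

end SW

/-- Adjacency of points in the link of a `(d-2)`-set `c`. -/
def Gam (d : ℕ) (V : Finset (Finset (Fin n))) (c : Finset (Fin n)) (p q : Fin n) : Prop :=
  p ≠ q ∧ p ∉ c ∧ q ∉ c ∧ insert p (insert q c) ∈ V

lemma vcard (hV : IsDualGraph d n V) (x : Vt V) : x.1.card = d := hV.card_eq x.1 x.2

/-- From a walk whose vertices all contain `c` (of size `d-2`), extract a `Gam`-chain of
points from any point of the first vertex to some point of the last vertex. -/
lemma walk_chain (hd : 2 ≤ d) (hV : IsDualGraph d n V) (c : Finset (Fin n))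
    (hc : c.card = d - 2) :
    ∀ {x y : Vt V} (p : (adjGraph n d V).Walk x y), (∀ t ∈ p.support, c ⊆ t.1) →
    ∀ a ∈ x.1 \ c, ∃ (k : ℕ) (q : ℕ → Fin n),
      (∀ i < k, Gam d V c (q i) (q (i+1))) ∧ q 0 = a ∧ q k ∈ y.1 \ c := by
  intro x y p
  induction p with
  | nil =>
    intro _ a ha
    exact ⟨0, fun _ => a, by omega, rfl, ha⟩
  | @cons x z₂ y h p ih =>
    intro hsup a ha
    have hcx : c ⊆ x.1 := hsup x (by simp)
    have hcz : c ⊆ z₂.1 := hsup z₂ (by simp [Walk.support_cons])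
    have hsub : c ⊆ x.1 ∩ z₂.1 := subset_inter hcx hcz
    have hcardi : (x.1 ∩ z₂.1).card = d - 1 := h.2
    have hbne : ((x.1 ∩ z₂.1) \ c).Nonempty := by
      rw [← card_pos, card_sdiff_of_subset hsub, hcardi, hc]; omega
    obtain ⟨b, hb⟩ := hbne
    have hbz : b ∈ z₂.1 \ c := by
      rw [mem_sdiff] at hb ⊢
      exact ⟨(mem_inter.1 hb.1).2, hb.2⟩
    obtain ⟨k, q, hch, hq0, hqk⟩ := ih (fun t ht => hsup t (by simp [Walk.support_cons, ht])) b hbz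
    by_cases hab : a = b
    · exact ⟨k, q, hch, by rw [hq0, hab], hqk⟩
    · refine ⟨k + 1, fun t => if t = 0 then a else q (t - 1), ?_, by simp, ?_⟩
      · intro i hi
        by_cases hi0 : i = 0
        · subst hi0
          show Gam d V c (if (0:ℕ) = 0 then a else q (0 - 1)) (if (0:ℕ) + 1 = 0 then a else q (0 + 1 - 1))
          have h1 : (if (0:ℕ) = 0 then a else q (0 - 1)) = a := by simp
          have h2 : (if (0:ℕ) + 1 = 0 then a else q (0 + 1 - 1)) = q 0 := by simp
          rw [h1, h2, hq0]
          have hax : a ∈ x.1 := (mem_sdiff.1 ha).1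
          have hac : a ∉ c := (mem_sdiff.1 ha).2
          have hbx : b ∈ x.1 := (mem_inter.1 (mem_sdiff.1 hb).1).1
          have hbc : b ∉ c := (mem_sdiff.1 hb).2
          refine ⟨hab, hac, hbc, ?_⟩
          have hsub2 : insert a (insert b c) ⊆ x.1 := by
            intro t ht
            rcases mem_insert.1 ht with rfl | ht
            · exact hax
            · rcases mem_insert.1 ht with rfl | ht
              · exact hbx
              · exact hcx ht
          have hcard2 : (insert a (insert b c)).card = d := by
            rw [card_insert_of_notMem (by simp [hab, hac]),
              card_insert_of_notMem hbc, hc]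
            omega
          have : insert a (insert b c) = x.1 :=
            eq_of_subset_of_card_le hsub2 (by rw [hcard2, vcard hV x])
          rw [this]; exact x.2
        · show Gam d V c (if i = 0 then a else q (i - 1)) (if i + 1 = 0 then a else q (i + 1 - 1))
          have h1 : (if i = 0 then a else q (i - 1)) = q (i - 1) := by simp [hi0]
          have h2 : (if i + 1 = 0 then a else q (i + 1 - 1)) = q i := by
            simp
          rw [h1, h2]
          have := hch (i - 1) (by omega)
          have hieq : i - 1 + 1 = i := by omega
          rwa [hieq] at this
      · simp only [if_neg (by omega : k + 1 ≠ 0)]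
        simpa using hqk
    

/-- Data of a geodesic chain of points in the link of a `(d-2)`-set `c`,
joining `x` to `y`. -/
structure GD {n : ℕ} (d : ℕ) (V : Finset (Finset (Fin n))) (c : Finset (Fin n))
    (x y : {u : Finset (Fin n) // u ∈ V}) where
  L : ℕ
  q : ℕ → Fin n
  hL1 : 1 ≤ L
  hL5 : L ≤ 5
  hq0 : q 0 ∈ x.1 \ c
  hqL : q L ∈ y.1 \ c
  inj : ∀ i ≤ L, ∀ j ≤ L, q i = q j → i = j
  notc : ∀ i ≤ L, q i ∉ c
  xrule : ∀ i ≤ L, q i ∈ x.1 \ c → i = 0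
  yrule : ∀ i ≤ L, q i ∈ y.1 \ c → i = L
  mem : ∀ i < L, insert (q i) (insert (q (i+1)) c) ∈ V

lemma gadget (hd : 2 ≤ d) (hn : n = d + 6) (hV : IsDualGraph d n V)
    (c : Finset (Fin n)) (hc : c.card = d - 2)
    {x y : {u : Finset (Fin n) // u ∈ V}} (hcx : c ⊆ x.1) (hcy : c ⊆ y.1)
    (hdisj : (x.1 \ c) ∩ (y.1 \ c) = ∅) :
    Nonempty (GD d V c x y) := by
  classical
  obtain ⟨p, hsup'⟩ := hV.locally_connected x y
  have hsup : ∀ t ∈ p.support, c ⊆ t.1 := fun t ht =>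
    (subset_inter hcx hcy).trans ((inter_subset_inter (le_refl _) (le_refl _)).trans (hsup' t ht))
  have hxc2 : (x.1 \ c).card = 2 := by
    rw [card_sdiff_of_subset hcx, vcard hV x, hc]; omega
  have hyc2 : (y.1 \ c).card = 2 := by
    rw [card_sdiff_of_subset hcy, vcard hV y, hc]; omega
  have hane : (x.1 \ c).Nonempty := by rw [← card_pos, hxc2]; omega
  obtain ⟨a, ha⟩ := hane
  obtain ⟨k0, q0, hch0, hq00, hq0k⟩ := walk_chain hd hV c hc p hsup a ha
  set Pk : ℕ → Prop := fun k => ∃ q : ℕ → Fin n,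
    (∀ i < k, Gam d V c (q i) (q (i+1))) ∧ q 0 ∈ x.1 \ c ∧ q k ∈ y.1 \ c with hPk
  have hex : ∃ k, Pk k := ⟨k0, q0, hch0, by rw [hq00]; exact ha, hq0k⟩
  set L := Nat.find hex with hL
  have hP : Pk L := Nat.find_spec hex
  have hmin : ∀ m, m < L → ¬ Pk m := fun m hm => Nat.find_min hex hm
  obtain ⟨q, hch, hq0, hqL⟩ := hP
  have hL1 : 1 ≤ L := by
    by_contra hcon
    have hL0 : L = 0 := by omega
    rw [hL0] at hqL
    have : q 0 ∈ (x.1 \ c) ∩ (y.1 \ c) := mem_inter.2 ⟨hq0, hqL⟩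
    rw [hdisj] at this
    exact notMem_empty _ this
  have hyrule : ∀ i ≤ L, q i ∈ y.1 \ c → i = L := by
    intro i hi hyi
    by_contra hcon
    exact hmin i (by omega) ⟨q, fun t ht => hch t (by omega), hq0, hyi⟩
  have hxrule : ∀ i ≤ L, q i ∈ x.1 \ c → i = 0 := by
    intro i hi hxi
    by_contra hcon
    refine hmin (L - i) (by omega) ⟨fun t => q (t + i), fun t ht => ?_, ?_, ?_⟩
    · show Gam d V c (q (t + i)) (q (t + 1 + i))
      have he : t + 1 + i = t + i + 1 := by omega
      rw [he]
      exact hch (t + i) (by omega)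
    · show q (0 + i) ∈ x.1 \ c
      simpa using hxi
    · show q (L - i + i) ∈ y.1 \ c
      have he : L - i + i = L := by omega
      rw [he]; exact hqL
  have hinj : ∀ i ≤ L, ∀ j ≤ L, q i = q j → i = j := by
    have aux : ∀ i j, i < j → j ≤ L → q i ≠ q j := by
      intro i j hij hjL heq
      rcases eq_or_lt_of_le hjL with rfl | hjL'
      · have := hyrule i (by omega) (by rw [heq]; exact hqL)
        omega
      · refine hmin (L - (j - i)) (by omega)
          ⟨fun t => if t ≤ i then q t else q (t + (j - i)), fun t ht => ?_, ?_, ?_⟩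
        · show Gam d V c (if t ≤ i then q t else q (t + (j-i)))
            (if t + 1 ≤ i then q (t+1) else q (t + 1 + (j-i)))
          rcases lt_trichotomy t i with h1 | h1 | h1
          · rw [if_pos (by omega : t ≤ i), if_pos (by omega : t + 1 ≤ i)]
            exact hch t (by omega)
          · rw [if_pos (by omega : t ≤ i), if_neg (by omega : ¬ t + 1 ≤ i)]
            have e2 : t + 1 + (j - i) = j + 1 := by omega
            rw [e2, h1, heq]
            exact hch j (by omega)
          · rw [if_neg (by omega : ¬ t ≤ i), if_neg (by omega : ¬ t + 1 ≤ i)]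
            have e2 : t + 1 + (j - i) = t + (j - i) + 1 := by omega
            rw [e2]
            exact hch (t + (j-i)) (by omega)
        · show (if (0:ℕ) ≤ i then q 0 else q (0 + (j-i))) ∈ x.1 \ c
          rw [if_pos (by omega)]; exact hq0
        · show (if L - (j-i) ≤ i then q (L - (j-i)) else q (L - (j-i) + (j-i))) ∈ y.1 \ c
          rw [if_neg (by omega)]
          have he : L - (j - i) + (j - i) = L := by omega
          rw [he]; exact hqL
    intro i hi j hj heq
    rcases lt_trichotomy i j with h | h | h
    · exact absurd heq (aux i j h hj)
    · exact h
    · exact absurd heq.symm (aux j i h hi)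
  have hnotc : ∀ i ≤ L, q i ∉ c := by
    intro i hi
    rcases lt_or_eq_of_le hi with h | h
    · exact (hch i h).2.1
    · have h2 := hch (L - 1) (by omega)
      have he : L - 1 + 1 = L := by omega
      rw [he] at h2
      rw [h]
      exact h2.2.2.1
  have hmem : ∀ i < L, insert (q i) (insert (q (i+1)) c) ∈ V := fun i hi => (hch i hi).2.2.2
  -- the length bound
  have hL5 : L ≤ 5 := by
    obtain ⟨x₂, hx₂, hx₂ne⟩ : ∃ x₂ ∈ x.1 \ c, x₂ ≠ q 0 := by
      have : ((x.1 \ c).erase (q 0)).Nonempty := by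
        rw [← card_pos, card_erase_of_mem hq0, hxc2]; omega
      obtain ⟨t, ht⟩ := this
      exact ⟨t, mem_of_mem_erase ht, ne_of_mem_erase ht⟩
    obtain ⟨y₂, hy₂, hy₂ne⟩ : ∃ y₂ ∈ y.1 \ c, y₂ ≠ q L := by
      have : ((y.1 \ c).erase (q L)).Nonempty := by
        rw [← card_pos, card_erase_of_mem hqL, hyc2]; omega
      obtain ⟨t, ht⟩ := this
      exact ⟨t, mem_of_mem_erase ht, ne_of_mem_erase ht⟩
    set A := (Finset.range (L+1)).image q with hA
    have hAcard : A.card = L + 1 := by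
      rw [hA, card_image_of_injOn, card_range]
      intro i hi j hj heq
      exact hinj i (by simpa using Nat.lt_succ_iff.1 (mem_range.1 hi))
        j (by simpa using Nat.lt_succ_iff.1 (mem_range.1 hj)) heq
    have hx₂A : x₂ ∉ A := by
      intro hmem'
      obtain ⟨i, hi, hqi⟩ := mem_image.1 hmem'
      have : i = 0 := hxrule i (Nat.lt_succ_iff.1 (mem_range.1 hi)) (hqi ▸ hx₂)
      rw [this] at hqi
      exact hx₂ne hqi.symm
    have hy₂A : y₂ ∉ A := by
      intro hmem'
      obtain ⟨i, hi, hqi⟩ := mem_image.1 hmem'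
      have : i = L := hyrule i (Nat.lt_succ_iff.1 (mem_range.1 hi)) (hqi ▸ hy₂)
      rw [this] at hqi
      exact hy₂ne hqi.symm
    have hxy₂ : x₂ ≠ y₂ := by
      intro heq
      have : x₂ ∈ (x.1 \ c) ∩ (y.1 \ c) := mem_inter.2 ⟨hx₂, heq ▸ hy₂⟩
      rw [hdisj] at this
      exact notMem_empty _ this
    have hBsub : insert x₂ (insert y₂ A) ⊆ univ \ c := by
      intro t ht
      rw [mem_sdiff]
      refine ⟨mem_univ t, ?_⟩
      rcases mem_insert.1 ht with rfl | ht
      · exact (mem_sdiff.1 hx₂).2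
      · rcases mem_insert.1 ht with rfl | ht
        · exact (mem_sdiff.1 hy₂).2
        · obtain ⟨i, hi, hqi⟩ := mem_image.1 ht
          exact hqi ▸ hnotc i (Nat.lt_succ_iff.1 (mem_range.1 hi))
    have hBcard : (insert x₂ (insert y₂ A)).card = L + 3 := by
      rw [card_insert_of_notMem (by simp [hxy₂, hx₂A]),
        card_insert_of_notMem hy₂A, hAcard]
    have hUcard : (univ \ c : Finset (Fin n)).card = 8 := by
      rw [card_sdiff_of_subset (subset_univ c), card_univ, Fintype.card_fin, hc, hn]
      omega
    have := card_le_card hBsub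
    rw [hBcard, hUcard] at this
    omega
  exact ⟨⟨L, q, hL1, hL5, hq0, hqL, hinj, hnotc, hxrule, hyrule, hmem⟩⟩

lemma inter_helper1 {s c : Finset (Fin n)} {p q' : Fin n}
    (hp : p ∈ s) (hq : q' ∉ s) (hcs : c ⊆ s) :
    s ∩ insert p (insert q' c) = insert p c := by
  ext t
  simp only [mem_inter, mem_insert]
  constructor
  · rintro ⟨hts, rfl | rfl | htc⟩
    · exact Or.inl rfl
    · exact absurd hts hq
    · exact Or.inr htc
  · rintro (rfl | htc)
    · exact ⟨hp, Or.inl rfl⟩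
    · exact ⟨hcs htc, Or.inr (Or.inr htc)⟩

lemma inter_helper2 {c : Finset (Fin n)} {p q' r : Fin n}
    (hpc : p ∉ c) (hpq : p ≠ q') (hpr : p ≠ r) (hqr : q' ≠ r) :
    insert p (insert q' c) ∩ insert q' (insert r c) = insert q' c := by
  ext t
  simp only [mem_inter, mem_insert]
  constructor
  · rintro ⟨rfl | rfl | htc, h2⟩
    · rcases h2 with h | h | h
      · exact absurd h hpq
      · exact absurd h hpr
      · exact absurd h hpc
    · exact Or.inl rfl
    · exact Or.inr htc
  · rintro (rfl | htc)
    · exact ⟨Or.inr (Or.inl rfl), Or.inl rfl⟩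
    · exact ⟨Or.inr (Or.inr htc), Or.inr (Or.inr htc)⟩

namespace GD

variable {c : Finset (Fin n)} {x y : Vt V}

/-- The `i`-th chain vertex of a gadget. -/
def cv (g : GD d V c x y) (i : ℕ) (hi : i < g.L) : Vt V :=
  ⟨insert (g.q i) (insert (g.q (i+1)) c), g.mem i hi⟩

lemma walk_pre (hd : 2 ≤ d) (hV : IsDualGraph d n V) (hc : c.card = d - 2)
    (hcx : c ⊆ x.1) (g : GD d V c x y) :
    ∀ i, (hi : i < g.L) → SW d c x (g.cv i hi) (i + 1) := by
  intro i
  induction i with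
  | zero =>
    intro hi
    have hq1x : g.q 1 ∉ x.1 := by
      intro hmem
      have : (1:ℕ) = 0 := g.xrule 1 (by omega) (mem_sdiff.2 ⟨hmem, g.notc 1 (by omega)⟩)
      omega
    have hne : x ≠ g.cv 0 hi := by
      intro heq
      apply hq1x
      have hval : x.1 = (g.cv 0 hi).1 := congrArg Subtype.val heq
      rw [hval]
      exact mem_insert.2 (Or.inr (mem_insert_self _ _))
    have hcard : (x.1 ∩ (g.cv 0 hi).1).card = d - 1 := by
      show (x.1 ∩ insert (g.q 0) (insert (g.q 1) c)).card = d - 1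
      rw [inter_helper1 (mem_sdiff.1 g.hq0).1 hq1x hcx,
        card_insert_of_notMem (mem_sdiff.1 g.hq0).2, hc]
      omega
    exact SW.of_adj hne hcard hcx (by
      intro t ht
      exact mem_insert.2 (Or.inr (mem_insert.2 (Or.inr ht))))
  | succ i ih =>
    intro hi
    have hiL : i < g.L := by omega
    have prev := ih hiL
    have h01 : g.q i ≠ g.q (i+1) := fun h => by
      have := g.inj i (by omega) (i+1) (by omega) h; omega
    have h02 : g.q i ≠ g.q (i+2) := fun h => by
      have := g.inj i (by omega) (i+2) (by omega) h; omega
    have h12 : g.q (i+1) ≠ g.q (i+2) := fun h => by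
      have := g.inj (i+1) (by omega) (i+2) (by omega) h; omega
    have hne : g.cv i hiL ≠ g.cv (i+1) hi := by
      intro heq
      have hmem : g.q i ∈ (g.cv (i+1) hi).1 := by
        rw [← heq]; exact mem_insert_self _ _
      rcases mem_insert.1 hmem with h | h
      · exact h01 h
      · rcases mem_insert.1 h with h | h
        · exact h02 (by rw [h])
        · exact g.notc i (by omega) h
    have hcard : ((g.cv i hiL).1 ∩ (g.cv (i+1) hi).1).card = d - 1 := by
      show (insert (g.q i) (insert (g.q (i+1)) c) ∩
        insert (g.q (i+1)) (insert (g.q (i+2)) c)).card = d - 1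
      rw [inter_helper2 (g.notc i (by omega)) h01 (by
          intro h; exact h02 (by rw [h])) (by
          intro h; exact h12 (by rw [h])),
        card_insert_of_notMem (g.notc (i+1) (by omega)), hc]
      omega
    have step : SW d c (g.cv i hiL) (g.cv (i+1) hi) 1 :=
      SW.of_adj hne hcard
        (fun t ht => mem_insert.2 (Or.inr (mem_insert.2 (Or.inr ht))))
        (fun t ht => mem_insert.2 (Or.inr (mem_insert.2 (Or.inr ht))))
    exact SW.mono_len (prev.trans step) (by omega)

lemma walk_last (hd : 2 ≤ d) (hV : IsDualGraph d n V) (hc : c.card = d - 2)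
    (hcy : c ⊆ y.1) (g : GD d V c x y) {i : ℕ} (hi : i < g.L) (hiL : i + 1 = g.L) :
    SW d c (g.cv i hi) y 1 := by
  have hqiy : g.q i ∉ y.1 := by
    intro hmem
    have : i = g.L := g.yrule i (by omega) (mem_sdiff.2 ⟨hmem, g.notc i (by omega)⟩)
    omega
  have hqLy : g.q (i+1) ∈ y.1 := by
    have := g.hqL
    rw [← hiL] at this
    exact (mem_sdiff.1 this).1
  have hne : g.cv i hi ≠ y := by
    intro heq
    apply hqiy
    have hval : (g.cv i hi).1 = y.1 := congrArg Subtype.val heq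
    rw [← hval]
    exact mem_insert_self _ _
  have hcard : ((g.cv i hi).1 ∩ y.1).card = d - 1 := by
    show (insert (g.q i) (insert (g.q (i+1)) c) ∩ y.1).card = d - 1
    rw [Finset.insert_comm, inter_comm,
      inter_helper1 hqLy hqiy hcy,
      card_insert_of_notMem (g.notc (i+1) (by omega)), hc]
    omega
  exact SW.of_adj hne hcard
    (fun t ht => mem_insert.2 (Or.inr (mem_insert.2 (Or.inr ht)))) hcy

lemma walk_full (hd : 2 ≤ d) (hV : IsDualGraph d n V) (hc : c.card = d - 2)
    (hcx : c ⊆ x.1) (hcy : c ⊆ y.1) (g : GD d V c x y) :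
    SW d c x y (g.L + 1) := by
  have hL1 := g.hL1
  have hi : g.L - 1 < g.L := by omega
  have hiL : g.L - 1 + 1 = g.L := by omega
  have h1 := walk_pre hd hV hc hcx g (g.L - 1) hi
  have h2 := walk_last hd hV hc hcy g hi hiL
  have := h1.trans h2
  rwa [show g.L - 1 + 1 + 1 = g.L + 1 by omega] at this

end GD

lemma SW.of_adjP {w : Finset (Fin n)} {x y : Vt V}
    (h : (adjGraph n d V).Adj x y) (hwx : w ⊆ x.1) (hwy : w ⊆ y.1) : SW d w x y 1 :=
  SW.of_adj h.1 h.2 hwx hwy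

lemma SW.of_close (hd : 2 ≤ d) (hV : IsDualGraph d n V) {w : Finset (Fin n)} {x y : Vt V}
    (h : d - 1 ≤ (x.1 ∩ y.1).card) (hwx : w ⊆ x.1) (hwy : w ⊆ y.1) : SW d w x y 1 := by
  have hcx := vcard hV x
  have hcy := vcard hV y
  have hle : (x.1 ∩ y.1).card ≤ d := by
    calc (x.1 ∩ y.1).card ≤ x.1.card := card_le_card inter_subset_left
    _ = d := hcx
  rcases eq_or_lt_of_le hle with heq | hlt
  · have h1 : x.1 ∩ y.1 = x.1 := eq_of_subset_of_card_le inter_subset_left (by omega)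
    have h2 : x.1 ⊆ y.1 := by rw [← h1]; exact inter_subset_right
    have h3 : x.1 = y.1 := eq_of_subset_of_card_le h2 (by omega)
    have h4 : x = y := Subtype.ext h3
    rw [h4]
    exact SW.refl d hwy 1
  · have hne : x ≠ y := by
      intro heq
      rw [heq, inter_self] at hlt
      omega
    exact SW.of_adj hne (by omega) hwx hwy

lemma firstmeet {w vb : Finset (Fin n)} {v : Vt V}
    (hvb : (v.1 ∩ vb).Nonempty) :
    ∀ (x : Vt V) (p : (adjGraph n d V).Walk x v), (∀ t ∈ p.support, w ⊆ t.1) →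
    x.1 ∩ vb = ∅ →
    ∃ pm m : Vt V, w ⊆ pm.1 ∧ w ⊆ m.1 ∧ pm.1 ∩ vb = ∅ ∧ (m.1 ∩ vb).Nonempty ∧
      (adjGraph n d V).Adj pm m ∧
      (pm = x ∨ ∃ y' : Vt V, w ⊆ y'.1 ∧ y'.1 ∩ vb = ∅ ∧ (adjGraph n d V).Adj y' pm) := by
  intro x p
  induction p with
  | nil =>
    intro _ hx
    rw [hx] at hvb
    exact absurd hvb (by simp)
  | @cons x z₂ y h p ih =>
    intro hsup hx
    rcases (z₂.1 ∩ vb).eq_empty_or_nonempty with he | hne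
    · obtain ⟨pm, m, h1, h2, h3, h4, h5, h6⟩ :=
        ih hvb (fun t ht => hsup t (by simp [Walk.support_cons, ht])) he
      refine ⟨pm, m, h1, h2, h3, h4, h5, Or.inr ?_⟩
      rcases h6 with rfl | ⟨y', hy1, hy2, hy3⟩
      · exact ⟨x, hsup x (by simp), hx, h⟩
      · exact ⟨y', hy1, hy2, hy3⟩
    · exact ⟨x, z₂, hsup x (by simp), hsup z₂ (by simp [Walk.support_cons]), hx, hne, h,
        Or.inl rfl⟩

/-- The distance bounds for gaps `0,…,6`. -/
def Mval : ℕ → ℕ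
  | 0 => 0
  | 1 => 1
  | 2 => 6
  | 3 => 8
  | 4 => 11
  | 5 => 13
  | _ => 14

lemma inter_card_ge (hn : n = d + 6) (hV : IsDualGraph d n V) (u v : Vt V) :
    d ≤ (u.1 ∩ v.1).card + 6 := by
  have h1 : (u.1 ∪ v.1).card + (u.1 ∩ v.1).card = u.1.card + v.1.card :=
    card_union_add_card_inter _ _
  have h2 : (u.1 ∪ v.1).card ≤ n := by
    calc (u.1 ∪ v.1).card ≤ (univ : Finset (Fin n)).card := card_le_card (subset_univ _)
    _ = n := by rw [card_univ, Fintype.card_fin]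
  have h3 := vcard hV u
  have h4 := vcard hV v
  omega

lemma sdiff_disj (x y : Finset (Fin n)) : (x \ (x ∩ y)) ∩ (y \ (x ∩ y)) = ∅ := by
  ext t
  simp only [mem_inter, mem_sdiff, notMem_empty, iff_false]
  rintro ⟨⟨h1, h2⟩, ⟨h3, h4⟩⟩
  exact h2 ⟨h1, h3⟩

theorem main (hd : 2 ≤ d) (hn : n = d + 6) (hV : IsDualGraph d n V) :
    ∀ k, ∀ u v : Vt V, d ≤ (u.1 ∩ v.1).card + k → SW d (u.1 ∩ v.1) u v (Mval k) := by
  intro k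
  induction k using Nat.strong_induction_on with
  | _ k ih =>
  have bridge : ∀ j, j < k → ∀ (w : Finset (Fin n)) (x y : Vt V), w ⊆ x.1 → w ⊆ y.1 →
      d ≤ (x.1 ∩ y.1).card + j → SW d w x y (Mval j) := by
    intro j hj w x y hwx hwy hcard
    exact (ih j hj x y hcard).mono_w (subset_inter hwx hwy)
  intro u v hk
  have hcu := vcard hV u
  have hcv := vcard hV v
  have hwu : u.1 ∩ v.1 ⊆ u.1 := inter_subset_left
  have hwv : u.1 ∩ v.1 ⊆ v.1 := inter_subset_right
  match k, ih, bridge, hk with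
  | 0, ih, bridge, hk =>
    have h1 : u.1 ∩ v.1 = u.1 := eq_of_subset_of_card_le inter_subset_left (by omega)
    have h2 : u.1 ⊆ v.1 := by rw [← h1]; exact inter_subset_right
    have h3 : u = v := Subtype.ext (eq_of_subset_of_card_le h2 (by omega))
    rw [h3]
    exact SW.refl d inter_subset_right 0
  | 1, ih, bridge, hk =>
    exact SW.of_close hd hV (by omega) hwu hwv
  | 2, ih, bridge, hk =>
    by_cases hprev : d ≤ (u.1 ∩ v.1).card + 1
    · exact (ih 1 (by omega) u v hprev).mono_len (by norm_num [Mval])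
    · have hc : (u.1 ∩ v.1).card = d - 2 := by omega
      obtain ⟨g⟩ := gadget hd hn hV _ hc hwu hwv (sdiff_disj u.1 v.1)
      have := GD.walk_full hd hV hc hwu hwv g
      exact this.mono_len (by have := g.hL5; simp only [Mval]; omega)
  | 3, ih, bridge, hk =>
    by_cases hprev : d ≤ (u.1 ∩ v.1).card + 2
    · exact (ih 2 (by omega) u v hprev).mono_len (by norm_num [Mval])
    have hcw : (u.1 ∩ v.1).card = d - 3 := by omega
    set w := u.1 ∩ v.1 with hw
    have hd3 : 3 ≤ d := by omega
    set ub := u.1 \ w with hubdef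
    set vb := v.1 \ w with hvbdef
    set Sp := (univ : Finset (Fin n)) \ (u.1 ∪ v.1) with hSpdef
    have hubc : ub.card = 3 := by rw [hubdef, card_sdiff_of_subset hwu]; omega
    have hvbc : vb.card = 3 := by rw [hvbdef, card_sdiff_of_subset hwv]; omega
    have hSpc : Sp.card = 3 := by
      have h1 : (u.1 ∪ v.1).card + (u.1 ∩ v.1).card = u.1.card + v.1.card :=
        card_union_add_card_inter _ _
      rw [hSpdef, card_sdiff_of_subset (subset_univ _), card_univ, Fintype.card_fin]
      rw [← hw] at h1
      omega
    have memSp : ∀ t : Fin n, t ∉ u.1 → t ∉ v.1 → t ∈ Sp := fun t h1 h2 =>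
      mem_sdiff.2 ⟨mem_univ t, fun h => (mem_union.1 h).elim h1 h2⟩
    have SpU : ∀ t ∈ Sp, t ∉ u.1 := fun t ht h => (mem_sdiff.1 ht).2 (mem_union_left _ h)
    have SpV : ∀ t ∈ Sp, t ∉ v.1 := fun t ht h => (mem_sdiff.1 ht).2 (mem_union_right _ h)
    have memub : ∀ t, t ∈ u.1 → t ∉ w → t ∈ ub := fun t h1 h2 => mem_sdiff.2 ⟨h1, h2⟩
    have ubU : ∀ t ∈ ub, t ∈ u.1 := fun t ht => (mem_sdiff.1 ht).1
    have ubW : ∀ t ∈ ub, t ∉ w := fun t ht => (mem_sdiff.1 ht).2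
    have ubV : ∀ t ∈ ub, t ∉ v.1 := fun t ht h => (mem_sdiff.1 ht).2
      (by rw [hw]; exact mem_inter.2 ⟨(mem_sdiff.1 ht).1, h⟩)
    have memvb : ∀ t, t ∈ v.1 → t ∉ w → t ∈ vb := fun t h1 h2 => mem_sdiff.2 ⟨h1, h2⟩
    have vbV : ∀ t ∈ vb, t ∈ v.1 := fun t ht => (mem_sdiff.1 ht).1
    have vbW : ∀ t ∈ vb, t ∉ w := fun t ht => (mem_sdiff.1 ht).2
    have vbU : ∀ t ∈ vb, t ∉ u.1 := fun t ht h => (mem_sdiff.1 ht).2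
      (by rw [hw]; exact mem_inter.2 ⟨h, (mem_sdiff.1 ht).1⟩)
    have wU : w ⊆ u.1 := hwu
    have wV : w ⊆ v.1 := hwv
    -- Case A1 : some vertex close to u meets vb.
    by_cases hA1 : ∃ z : Vt V, w ⊆ z.1 ∧ SW d w u z 2 ∧ (z.1 ∩ vb).Nonempty
    · obtain ⟨z, hzw, hsw, ⟨b, hb⟩⟩ := hA1
      have hbz : b ∈ z.1 := (mem_inter.1 hb).1
      have hbvb : b ∈ vb := (mem_inter.1 hb).2
      have hzv2 : d ≤ (z.1 ∩ v.1).card + 2 := by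
        have hsub : insert b w ⊆ z.1 ∩ v.1 :=
          insert_subset (mem_inter.2 ⟨hbz, vbV b hbvb⟩) (subset_inter hzw hwv)
        have := card_le_card hsub
        rw [card_insert_of_notMem (vbW b hbvb)] at this
        omega
      have tailz : SW d w z v (Mval 2) := bridge 2 (by omega) w z v hzw hwv hzv2
      exact (hsw.trans tailz).mono_len (by norm_num [Mval])
    by_cases hA2 : ∃ z : Vt V, w ⊆ z.1 ∧ SW d w v z 2 ∧ (z.1 ∩ ub).Nonempty
    · obtain ⟨z, hzw, hsw, ⟨a, ha⟩⟩ := hA2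
      have hza : a ∈ z.1 := (mem_inter.1 ha).1
      have haub : a ∈ ub := (mem_inter.1 ha).2
      have huz2 : d ≤ (u.1 ∩ z.1).card + 2 := by
        have hsub : insert a w ⊆ u.1 ∩ z.1 :=
          insert_subset (mem_inter.2 ⟨ubU a haub, hza⟩) (subset_inter hwu hzw)
        have := card_le_card hsub
        rw [card_insert_of_notMem (ubW a haub)] at this
        omega
      have headz : SW d w u z (Mval 2) := bridge 2 (by omega) w u z hwu hzw huz2
      exact (headz.trans hsw.symm).mono_len (by norm_num [Mval])
    push_neg at hA1 hA2
    have hA1' : ∀ z : Vt V, w ⊆ z.1 → SW d w u z 2 → z.1 ∩ vb = ∅ := fun z h1 h2 =>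
      hA1 z h1 h2
    have hA2' : ∀ z : Vt V, w ⊆ z.1 → SW d w v z 2 → z.1 ∩ ub = ∅ := fun z h1 h2 =>
      hA2 z h1 h2
    -- STEP1 sublemma
    have step1 : ∀ P : Vt V, w ⊆ P.1 → P.1 ∩ vb = ∅ → (P.1 ∩ ub).card = 1 →
        SW d w u P 3 := by
      intro P hPw hPvb hPub
      obtain ⟨a, ha⟩ := card_eq_one.1 hPub
      have haP : a ∈ P.1 := (mem_inter.1 (ha ▸ mem_singleton_self a)).1
      have haub : a ∈ ub := (mem_inter.1 (ha ▸ mem_singleton_self a)).2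
      have haw : a ∉ w := ubW a haub
      have hau : a ∈ u.1 := ubU a haub
      set c₁ := insert a w with hc₁def
      have hwc₁ : w ⊆ c₁ := subset_insert _ _
      have hcc₁ : c₁.card = d - 2 := by
        rw [hc₁def, card_insert_of_notMem haw]; omega
      have hc₁u : c₁ ⊆ u.1 := insert_subset hau hwu
      have hc₁P : c₁ ⊆ P.1 := insert_subset haP hPw
      have hPcard := vcard hV P
      have hPhat : ∀ t ∈ P.1 \ c₁, t ∈ Sp := by
        intro t ht
        obtain ⟨htP, htc⟩ := mem_sdiff.1 ht
        have htw : t ∉ w := fun h => htc (mem_insert.2 (Or.inr h))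
        refine memSp t (fun htu => ?_) (fun htv => ?_)
        · have : t ∈ P.1 ∩ ub := mem_inter.2 ⟨htP, memub t htu htw⟩
          rw [ha] at this
          exact htc (mem_insert.2 (Or.inl (mem_singleton.1 this)))
        · have : t ∈ P.1 ∩ vb := mem_inter.2 ⟨htP, memvb t htv htw⟩
          rw [hPvb] at this
          exact notMem_empty _ this
      have hdisj : (u.1 \ c₁) ∩ (P.1 \ c₁) = ∅ := by
        ext t
        simp only [mem_inter, notMem_empty, iff_false]
        rintro ⟨ht1, ht2⟩
        exact SpU t (hPhat t ht2) (mem_sdiff.1 ht1).1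
      obtain ⟨g⟩ := gadget hd hn hV _ hcc₁ hc₁u hc₁P hdisj
      have hL1 := g.hL1
      have hL5 := g.hL5
      -- claim g.L ≤ 2
      have hgle : g.L ≤ 2 := by
        by_contra hgt
        have hg3 : 3 ≤ g.L := by omega
        -- q1 analysis
        have hcv0 := (GD.walk_pre hd hV hcc₁ hc₁u g 0 (by omega)).mono_w hwc₁
        have hwcv0 : w ⊆ (g.cv 0 (by omega)).1 :=
          hwc₁.trans (fun t ht => mem_insert.2 (Or.inr (mem_insert.2 (Or.inr ht))))
        have hcv0vb := hA1' _ hwcv0 (hcv0.mono_len (by omega))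
        have hq1cv : g.q 1 ∈ (g.cv 0 (by omega)).1 :=
          mem_insert.2 (Or.inr (mem_insert_self _ _))
        have hq1vb : g.q 1 ∉ vb := fun h => by
          have : g.q 1 ∈ (g.cv 0 (by omega)).1 ∩ vb := mem_inter.2 ⟨hq1cv, h⟩
          rw [hcv0vb] at this
          exact notMem_empty _ this
        have hq1c : g.q 1 ∉ c₁ := g.notc 1 (by omega)
        have hq1w : g.q 1 ∉ w := fun h => hq1c (hwc₁ h)
        have hq1u : g.q 1 ∉ u.1 := fun h => by
          have := g.xrule 1 (by omega) (mem_sdiff.2 ⟨h, hq1c⟩); omega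
        have hq1v : g.q 1 ∉ v.1 := fun h => hq1vb (memvb _ h hq1w)
        have hq1Sp : g.q 1 ∈ Sp := memSp _ hq1u hq1v
        have hq1P : g.q 1 ∉ P.1 \ c₁ := fun h => by
          have := g.yrule 1 (by omega) h; omega
        -- q2 analysis
        have hcv1 := (GD.walk_pre hd hV hcc₁ hc₁u g 1 (by omega)).mono_w hwc₁
        have hwcv1 : w ⊆ (g.cv 1 (by omega)).1 :=
          hwc₁.trans (fun t ht => mem_insert.2 (Or.inr (mem_insert.2 (Or.inr ht))))
        have hcv1vb := hA1' _ hwcv1 (hcv1.mono_len (by omega))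
        have hq2cv : g.q 2 ∈ (g.cv 1 (by omega)).1 :=
          mem_insert.2 (Or.inr (mem_insert_self _ _))
        have hq2vb : g.q 2 ∉ vb := fun h => by
          have : g.q 2 ∈ (g.cv 1 (by omega)).1 ∩ vb := mem_inter.2 ⟨hq2cv, h⟩
          rw [hcv1vb] at this
          exact notMem_empty _ this
        have hq2c : g.q 2 ∉ c₁ := g.notc 2 (by omega)
        have hq2w : g.q 2 ∉ w := fun h => hq2c (hwc₁ h)
        have hq2u : g.q 2 ∉ u.1 := fun h => by
          have := g.xrule 2 (by omega) (mem_sdiff.2 ⟨h, hq2c⟩); omega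
        have hq2v : g.q 2 ∉ v.1 := fun h => hq2vb (memvb _ h hq2w)
        have hq2Sp : g.q 2 ∈ Sp := memSp _ hq2u hq2v
        have hq2P : g.q 2 ∉ P.1 \ c₁ := fun h => by
          have := g.yrule 2 (by omega) h; omega
        have hq12 : g.q 1 ≠ g.q 2 := fun h => by
          have := g.inj 1 (by omega) 2 (by omega) h; omega
        -- count : insert q1 (insert q2 (P \ c₁)) ⊆ Sp with card 4 > 3
        have hPc : (P.1 \ c₁).card = 2 := by
          rw [card_sdiff_of_subset hc₁P]; omega
        have hsubSp : insert (g.q 1) (insert (g.q 2) (P.1 \ c₁)) ⊆ Sp := by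
          intro t ht
          rcases mem_insert.1 ht with rfl | ht
          · exact hq1Sp
          · rcases mem_insert.1 ht with rfl | ht
            · exact hq2Sp
            · exact hPhat t ht
        have hcard4 : (insert (g.q 1) (insert (g.q 2) (P.1 \ c₁))).card = 4 := by
          rw [card_insert_of_notMem (by
            simp only [mem_insert]
            rintro (h | h)
            · exact hq12 h
            · exact hq1P h),
            card_insert_of_notMem hq2P, hPc]
        have := card_le_card hsubSp
        rw [hcard4, hSpc] at this
        omega
      have hfull := GD.walk_full hd hV hcc₁ hc₁u hc₁P g
      exact (hfull.mono_w hwc₁).mono_len (by omega)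
    -- main walk and first meeting vertex
    obtain ⟨p, hsup⟩ := hV.locally_connected u v
    have hvbne : (v.1 ∩ vb).Nonempty := by
      have h' : v.1 ∩ vb = vb := inter_eq_right.2 sdiff_subset
      rw [h', ← card_pos, hvbc]; omega
    have hune : u.1 ∩ vb = ∅ := by
      ext t
      simp only [hvbdef, mem_inter, mem_sdiff, notMem_empty, iff_false]
      rintro ⟨h1, h2, h3⟩
      exact h3 (by rw [hw]; exact mem_inter.2 ⟨h1, h2⟩)
    obtain ⟨pm, m, hpmw, hmw, hpmvb, hmvb, hadj, hpred⟩ := firstmeet hvbne u p hsup hune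
    obtain ⟨b, hb⟩ := hmvb
    have hbm : b ∈ m.1 := (mem_inter.1 hb).1
    have hbvb : b ∈ vb := (mem_inter.1 hb).2
    have hbv : b ∈ v.1 := vbV b hbvb
    have hbw : b ∉ w := vbW b hbvb
    have hbu : b ∉ u.1 := vbU b hbvb
    have hpmcard := vcard hV pm
    have hmcard := vcard hV m
    have hbpm : b ∉ pm.1 := fun h => by
      have hbb : b ∈ pm.1 ∩ vb := mem_inter.2 ⟨h, hbvb⟩
      rw [hpmvb] at hbb
      exact notMem_empty _ hbb
    have hmpm : m.1 \ pm.1 = {b} := by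
      have h1 : (m.1 ∩ pm.1).card = d - 1 := by
        rw [inter_comm]; exact hadj.2
      have h2 : (m.1 \ pm.1).card + (m.1 ∩ pm.1).card = m.1.card :=
        card_sdiff_add_card_inter _ _
      have h3 : {b} ⊆ m.1 \ pm.1 := singleton_subset_iff.2 (mem_sdiff.2 ⟨hbm, hbpm⟩)
      exact (eq_of_subset_of_card_le h3 (by rw [card_singleton]; omega)).symm
    -- large overlap of pm with u is impossible
    have himposs : 2 ≤ (pm.1 ∩ ub).card → False := by
      intro h2
      have hdisjwu : Disjoint w (pm.1 ∩ ub) := by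
        rw [Finset.disjoint_left]
        intro t htw htub
        exact ubW t (mem_inter.1 htub).2 htw
      have hsub : w ∪ (pm.1 ∩ ub) ⊆ u.1 ∩ pm.1 := by
        intro t ht
        rcases mem_union.1 ht with h | h
        · exact mem_inter.2 ⟨hwu h, hpmw h⟩
        · exact mem_inter.2 ⟨ubU t (mem_inter.1 h).2, (mem_inter.1 h).1⟩
      have hge : d - 1 ≤ (u.1 ∩ pm.1).card := by
        have := card_le_card hsub
        rw [card_union_of_disjoint hdisjwu] at this
        omega
      have h1 : SW d w u pm 1 := SW.of_close hd hV hge hwu hpmw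
      have h2' : SW d w pm m 1 := SW.of_adjP hadj hpmw hmw
      have hempty := hA1' m hmw ((h1.trans h2').mono_len (by omega))
      have hbb : b ∈ m.1 ∩ vb := mem_inter.2 ⟨hbm, hbvb⟩
      rw [hempty] at hbb
      exact notMem_empty _ hbb
    -- head walks
    have Hhead : ((pm.1 ∩ ub).card = 0 ∧ SW d w u m 5) ∨
        ((pm.1 ∩ ub).card = 1 ∧ SW d w u m 4) := by
      have hle1 : (pm.1 ∩ ub).card ≤ 1 := by
        by_contra hcon
        exact himposs (by omega)
      rcases Nat.eq_zero_or_pos (pm.1 ∩ ub).card with h0 | h1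
      · -- the hard zero case : use the predecessor y'
        left
        refine ⟨h0, ?_⟩
        have hpmubE : pm.1 ∩ ub = ∅ := card_eq_zero.1 h0
        have hpmbSp : pm.1 \ w ⊆ Sp := by
          intro t ht
          obtain ⟨htpm, htw⟩ := mem_sdiff.1 ht
          refine memSp t (fun htu => ?_) (fun htv => ?_)
          · have hx : t ∈ pm.1 ∩ ub := mem_inter.2 ⟨htpm, memub t htu htw⟩
            rw [hpmubE] at hx
            exact notMem_empty _ hx
          · have hx : t ∈ pm.1 ∩ vb := mem_inter.2 ⟨htpm, memvb t htv htw⟩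
            rw [hpmvb] at hx
            exact notMem_empty _ hx
        have hpmbc : (pm.1 \ w).card = 3 := by rw [card_sdiff_of_subset hpmw, hpmcard, hcw]; omega
        have hpmbSp' : pm.1 \ w = Sp := eq_of_subset_of_card_le hpmbSp (by omega)
        rcases hpred with rfl | ⟨y', hy'w, hy'vb, hy'adj⟩
        · -- pm = u : impossible since then ub ⊆ Sp
          exfalso
          have hubne : ub.Nonempty := by rw [← card_pos, hubc]; omega
          obtain ⟨a, ha⟩ := hubne
          have : a ∈ Sp := by
            rw [← hpmbSp']
            exact mem_sdiff.2 ⟨ubU a ha, ubW a ha⟩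
          exact SpU a this (ubU a ha)
        · -- analyse y'
          have hy'card := vcard hV y'
          have hy'bc : (y'.1 \ w).card = 3 := by rw [card_sdiff_of_subset hy'w, hy'card, hcw]; omega
          have hwy'pm : w ⊆ y'.1 ∩ pm.1 := subset_inter hy'w hpmw
          have hyp2 : ((y'.1 ∩ pm.1) \ w).card = 2 := by
            rw [card_sdiff_of_subset hwy'pm, hy'adj.2]; omega
          have hypSp : (y'.1 ∩ pm.1) \ w ⊆ (y'.1 \ w) ∩ Sp := by
            intro t ht
            obtain ⟨htyp, htw⟩ := mem_sdiff.1 ht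
            refine mem_inter.2 ⟨mem_sdiff.2 ⟨(mem_inter.1 htyp).1, htw⟩, ?_⟩
            rw [← hpmbSp']
            exact mem_sdiff.2 ⟨(mem_inter.1 htyp).2, htw⟩
          have hySp2 : 2 ≤ ((y'.1 \ w) ∩ Sp).card := by
            have := card_le_card hypSp
            omega
          have hyub : (y'.1 \ w) ∩ ub = y'.1 ∩ ub := by
            ext t
            simp only [mem_inter, mem_sdiff]
            constructor
            · rintro ⟨⟨h1, h2⟩, h3⟩; exact ⟨h1, h3⟩
            · rintro ⟨h1, h2⟩; exact ⟨⟨h1, ubW t h2⟩, h2⟩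
          have hysplit : y'.1 \ w ⊆ ((y'.1 \ w) ∩ ub) ∪ ((y'.1 \ w) ∩ Sp) := by
            intro t ht
            obtain ⟨hty, htw⟩ := mem_sdiff.1 ht
            rw [mem_union]
            by_cases htu : t ∈ u.1
            · exact Or.inl (mem_inter.2 ⟨ht, memub t htu htw⟩)
            · by_cases htv : t ∈ v.1
              · exfalso
                have hx : t ∈ y'.1 ∩ vb := mem_inter.2 ⟨hty, memvb t htv htw⟩
                rw [hy'vb] at hx
                exact notMem_empty _ hx
              · exact Or.inr (mem_inter.2 ⟨ht, memSp t htu htv⟩)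
          have hyub_le : ((y'.1 \ w) ∩ ub).card ≤ 1 := by
            by_contra hcon
            have h4 : 2 ≤ ((y'.1 \ w) ∩ ub).card := by omega
            have hdisjUS : Disjoint ((y'.1 \ w) ∩ ub) ((y'.1 \ w) ∩ Sp) := by
              rw [Finset.disjoint_left]
              intro t ht1 ht2
              exact SpU t (mem_inter.1 ht2).2 (ubU t (mem_inter.1 ht1).2)
            have hsub2 : ((y'.1 \ w) ∩ ub) ∪ ((y'.1 \ w) ∩ Sp) ⊆ y'.1 \ w :=
              union_subset inter_subset_left inter_subset_left
            have hle := card_le_card hsub2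
            rw [card_union_of_disjoint hdisjUS] at hle
            omega
          have hyub_pos : 1 ≤ (y'.1 ∩ ub).card := by
            by_contra hcon
            -- y'∖w ⊆ Sp hence = Sp = pm∖w hence y' = pm, contradiction
            have h0' : (y'.1 ∩ ub).card = 0 := by omega
            have h0'' : y'.1 ∩ ub = ∅ := card_eq_zero.1 h0'
            have hsubSp : y'.1 \ w ⊆ Sp := by
              intro t ht
              rcases mem_union.1 (hysplit ht) with h | h
              · exfalso
                have hx : t ∈ y'.1 ∩ ub := by
                  rw [← hyub]; exact h
                rw [h0''] at hx
                exact notMem_empty _ hx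
              · exact (mem_inter.1 h).2
            have hyeq : y'.1 \ w = Sp := eq_of_subset_of_card_le hsubSp (by omega)
            have hy'pm : y'.1 = pm.1 := by
              have e1 : y'.1 \ w ∪ w = y'.1 := sdiff_union_of_subset hy'w
              have e2 : pm.1 \ w ∪ w = pm.1 := sdiff_union_of_subset hpmw
              rw [← e1, ← e2, hyeq, hpmbSp']
            exact hy'adj.1 (Subtype.ext hy'pm)
          have hyub1 : (y'.1 ∩ ub).card = 1 := by
            have : (y'.1 ∩ ub).card ≤ 1 := by rw [← hyub]; exact hyub_le
            omega
          have hy3 : SW d w u y' 3 := step1 y' hy'w hy'vb hyub1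
          have hy4 : SW d w y' pm 1 := SW.of_adjP hy'adj hy'w hpmw
          have hy5 : SW d w pm m 1 := SW.of_adjP hadj hpmw hmw
          exact ((hy3.trans hy4).trans hy5).mono_len (by omega)
      · right
        have h1 : (pm.1 ∩ ub).card = 1 := by omega
        refine ⟨h1, ?_⟩
        have hy3 : SW d w u pm 3 := step1 pm hpmw hpmvb h1
        have hy5 : SW d w pm m 1 := SW.of_adjP hadj hpmw hmw
        exact (hy3.trans hy5).mono_len (by omega)
    -- the tail from m to v
    by_cases hclose : d - 1 ≤ (m.1 ∩ v.1).card
    · have tail : SW d w m v 1 := SW.of_close hd hV hclose hmw hwv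
      have head5 : SW d w u m 5 := by
        rcases Hhead with ⟨-, h⟩ | ⟨-, h⟩
        · exact h
        · exact h.mono_len (by omega)
      exact (head5.trans tail).mono_len (by norm_num [Mval])
    -- now (m ∩ v).card = d - 2
    have hc2le : (m.1 ∩ v.1).card = d - 2 := by
      have hsub : insert b w ⊆ m.1 ∩ v.1 :=
        insert_subset (mem_inter.2 ⟨hbm, hbv⟩) (subset_inter hmw hwv)
      have := card_le_card hsub
      rw [card_insert_of_notMem hbw] at this
      omega
    set c₂ := v.1 ∩ m.1 with hc₂def
    have hcc₂ : c₂.card = d - 2 := by rw [hc₂def, inter_comm]; exact hc2le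
    have hwc₂ : w ⊆ c₂ := subset_inter hwv hmw
    obtain ⟨g₂⟩ := gadget hd hn hV _ hcc₂ inter_subset_left inter_subset_right
      (sdiff_disj v.1 m.1)
    have hL1₂ := g₂.hL1
    have hL5₂ := g₂.hL5
    have tailfull : SW d w m v (g₂.L + 1) :=
      ((GD.walk_full hd hV hcc₂ inter_subset_left inter_subset_right g₂).mono_w hwc₂).symm
    have hmc2 : (m.1 \ c₂).card = 2 := by
      rw [card_sdiff_of_subset inter_subset_right, hmcard, hcc₂]; omega
    -- m-hat ∩ ub lands in pm ∩ ub
    have hmub_sub : (m.1 \ c₂) ∩ ub ⊆ pm.1 ∩ ub := by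
      intro t ht
      obtain ⟨ht1, ht2⟩ := mem_inter.1 ht
      have htm : t ∈ m.1 := (mem_sdiff.1 ht1).1
      have htb : t ≠ b := fun h => ubV t ht2 (h ▸ hbv)
      have htpm : t ∈ pm.1 := by
        by_contra hcon
        have hx : t ∈ m.1 \ pm.1 := mem_sdiff.2 ⟨htm, hcon⟩
        rw [hmpm] at hx
        exact htb (mem_singleton.1 hx)
      exact mem_inter.2 ⟨htpm, ht2⟩
    -- geodesic point facts
    have rfact : ∀ j, j + 1 ≤ 2 → 3 ≤ g₂.L →
        g₂.q (j+1) ∈ Sp ∧ g₂.q (j+1) ∉ m.1 \ c₂ := by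
      intro j hj hρ
      have hjL : j < g₂.L := by omega
      have hcv := (GD.walk_pre hd hV hcc₂ inter_subset_left g₂ j hjL).mono_w hwc₂
      have hwcv : w ⊆ (g₂.cv j hjL).1 :=
        hwc₂.trans (fun t ht => mem_insert.2 (Or.inr (mem_insert.2 (Or.inr ht))))
      have hcvub := hA2' _ hwcv (hcv.mono_len (by omega))
      have hqcv : g₂.q (j+1) ∈ (g₂.cv j hjL).1 :=
        mem_insert.2 (Or.inr (mem_insert_self _ _))
      have hqub : g₂.q (j+1) ∉ ub := fun h => by
        have hx : g₂.q (j+1) ∈ (g₂.cv j hjL).1 ∩ ub := mem_inter.2 ⟨hqcv, h⟩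
        rw [hcvub] at hx
        exact notMem_empty _ hx
      have hqc : g₂.q (j+1) ∉ c₂ := g₂.notc (j+1) (by omega)
      have hqw : g₂.q (j+1) ∉ w := fun h => hqc (hwc₂ h)
      have hqv : g₂.q (j+1) ∉ v.1 := fun h => by
        have := g₂.xrule (j+1) (by omega) (mem_sdiff.2 ⟨h, hqc⟩); omega
      have hqu : g₂.q (j+1) ∉ u.1 := fun h => hqub (memub _ h hqw)
      have hqm : g₂.q (j+1) ∉ m.1 \ c₂ := fun h => by
        have := g₂.yrule (j+1) (by omega) h; omega
      exact ⟨memSp _ hqu hqv, hqm⟩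
    rcases Hhead with ⟨hpm0, head5⟩ | ⟨hpm1, head4⟩
    · -- zero case : show g₂.L ≤ 2
      have hρ2 : g₂.L ≤ 2 := by
        by_contra hcon
        have hρ : 3 ≤ g₂.L := by omega
        obtain ⟨hf1Sp, hf1m⟩ := rfact 0 (by omega) hρ
        obtain ⟨hf2Sp, hf2m⟩ := rfact 1 (by omega) hρ
        have hq12 : g₂.q 1 ≠ g₂.q 2 := fun h => by
          have := g₂.inj 1 (by omega) 2 (by omega) h; omega
        -- m \ c₂ ⊆ Sp
        have hpmubE : pm.1 ∩ ub = ∅ := card_eq_zero.1 hpm0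
        have hmSp : m.1 \ c₂ ⊆ Sp := by
          intro t ht
          obtain ⟨htm, htc⟩ := mem_sdiff.1 ht
          have htw : t ∉ w := fun h => htc (hwc₂ h)
          refine memSp t (fun htu => ?_) (fun htv => ?_)
          · have hx : t ∈ (m.1 \ c₂) ∩ ub := mem_inter.2 ⟨ht, memub t htu htw⟩
            have hx2 := hmub_sub hx
            rw [hpmubE] at hx2
            exact notMem_empty _ hx2
          · exact htc (mem_inter.2 ⟨htv, htm⟩)
        have hsubSp : insert (g₂.q 1) (insert (g₂.q 2) (m.1 \ c₂)) ⊆ Sp := by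
          intro t ht
          rcases mem_insert.1 ht with rfl | ht
          · exact hf1Sp
          · rcases mem_insert.1 ht with rfl | ht
            · exact hf2Sp
            · exact hmSp ht
        have hcard4 : (insert (g₂.q 1) (insert (g₂.q 2) (m.1 \ c₂))).card = 4 := by
          rw [card_insert_of_notMem (by
            simp only [mem_insert]
            rintro (h | h)
            · exact hq12 h
            · exact hf1m h),
            card_insert_of_notMem hf2m, hmc2]
        have := card_le_card hsubSp
        rw [hcard4, hSpc] at this
        omega
      exact (head5.trans (tailfull.mono_len (show g₂.L + 1 ≤ 3 by omega))).mono_len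
        (by norm_num [Mval])
    · -- one case
      by_cases hρ3 : g₂.L ≤ 3
      · exact (head4.trans (tailfull.mono_len (show g₂.L + 1 ≤ 4 by omega))).mono_len
          (by norm_num [Mval])
      have hρ4 : 4 ≤ g₂.L := by omega
      obtain ⟨hf1Sp, hf1m⟩ := rfact 0 (by omega) (by omega)
      obtain ⟨hf2Sp, hf2m⟩ := rfact 1 (by omega) (by omega)
      have hq12 : g₂.q 1 ≠ g₂.q 2 := fun h => by
        have := g₂.inj 1 (by omega) 2 (by omega) h; omega
      have hr3c : g₂.q 3 ∉ c₂ := g₂.notc 3 (by omega)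
      have hr3w : g₂.q 3 ∉ w := fun h => hr3c (hwc₂ h)
      have hr3v : g₂.q 3 ∉ v.1 := fun h => by
        have := g₂.xrule 3 (by omega) (mem_sdiff.2 ⟨h, hr3c⟩); omega
      have hr3m : g₂.q 3 ∉ m.1 \ c₂ := fun h => by
        have := g₂.yrule 3 (by omega) h; omega
      by_cases hr3u : g₂.q 3 ∈ u.1
      · -- STEP3
        have hr3ub : g₂.q 3 ∈ ub := memub _ hr3u hr3w
        have h2L : 2 < g₂.L := by omega
        set hv := g₂.cv 2 h2L with hhv
        have tail3 : SW d w v hv 3 :=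
          (GD.walk_pre hd hV hcc₂ inter_subset_left g₂ 2 h2L).mono_w hwc₂
        have hr3hv : g₂.q 3 ∈ hv.1 := mem_insert.2 (Or.inr (mem_insert_self _ _))
        have hr2hv : g₂.q 2 ∈ hv.1 := mem_insert_self _ _
        have hwhv : w ⊆ hv.1 :=
          hwc₂.trans (fun t ht => mem_insert.2 (Or.inr (mem_insert.2 (Or.inr ht))))
        set c₃ := insert (g₂.q 3) w with hc₃def
        have hwc₃ : w ⊆ c₃ := subset_insert _ _
        have hcc₃ : c₃.card = d - 2 := by
          rw [hc₃def, card_insert_of_notMem hr3w, hcw]; omega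
        have hc₃u : c₃ ⊆ u.1 := insert_subset hr3u hwu
        have hc₃hv : c₃ ⊆ hv.1 := insert_subset hr3hv hwhv
        have hdisj3 : (u.1 \ c₃) ∩ (hv.1 \ c₃) = ∅ := by
          ext t
          simp only [mem_inter, notMem_empty, iff_false]
          rintro ⟨ht1, ht2⟩
          obtain ⟨htu, htc⟩ := mem_sdiff.1 ht1
          obtain ⟨hthv, -⟩ := mem_sdiff.1 ht2
          rcases mem_insert.1 hthv with rfl | hthv'
          · exact SpU _ hf2Sp htu
          rcases mem_insert.1 hthv' with heq | htc₂
          · exact htc (heq ▸ mem_insert_self _ _)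
          · have htv : t ∈ v.1 := (mem_inter.1 htc₂).1
            have htw : t ∈ w := by rw [hw]; exact mem_inter.2 ⟨htu, htv⟩
            exact htc (hwc₃ htw)
        obtain ⟨g₃⟩ := gadget hd hn hV _ hcc₃ hc₃u hc₃hv hdisj3
        have hL1₃ := g₃.hL1
        have hL5₃ := g₃.hL5
        by_cases hdel : g₃.L ≤ 4
        · have hfull3 := GD.walk_full hd hV hcc₃ hc₃u hc₃hv g₃
          have huh : SW d w u hv 5 := (hfull3.mono_w hwc₃).mono_len (by omega)
          exact (huh.trans tail3.symm).mono_len (by norm_num [Mval])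
        · exfalso
          have hdel5 : g₃.L = 5 := by omega
          have ofact : ∀ j, j + 1 ≤ 2 → g₃.q (j+1) ∈ Sp ∧ g₃.q (j+1) ∉ hv.1 \ c₃ := by
            intro j hj
            have hjL : j < g₃.L := by omega
            have hcvw := (GD.walk_pre hd hV hcc₃ hc₃u g₃ j hjL).mono_w hwc₃
            have hwcv : w ⊆ (g₃.cv j hjL).1 :=
              hwc₃.trans (fun t ht => mem_insert.2 (Or.inr (mem_insert.2 (Or.inr ht))))
            have hcvvb := hA1' _ hwcv (hcvw.mono_len (by omega))
            have hqcv : g₃.q (j+1) ∈ (g₃.cv j hjL).1 :=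
              mem_insert.2 (Or.inr (mem_insert_self _ _))
            have hqvb : g₃.q (j+1) ∉ vb := fun h => by
              have hx : g₃.q (j+1) ∈ (g₃.cv j hjL).1 ∩ vb := mem_inter.2 ⟨hqcv, h⟩
              rw [hcvvb] at hx
              exact notMem_empty _ hx
            have hqc : g₃.q (j+1) ∉ c₃ := g₃.notc (j+1) (by omega)
            have hqw : g₃.q (j+1) ∉ w := fun h => hqc (hwc₃ h)
            have hqu : g₃.q (j+1) ∉ u.1 := fun h => by
              have := g₃.xrule (j+1) (by omega) (mem_sdiff.2 ⟨h, hqc⟩); omega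
            have hqv : g₃.q (j+1) ∉ v.1 := fun h => hqvb (memvb _ h hqw)
            have hqm : g₃.q (j+1) ∉ hv.1 \ c₃ := fun h => by
              have := g₃.yrule (j+1) (by omega) h; omega
            exact ⟨memSp _ hqu hqv, hqm⟩
          obtain ⟨ho1Sp, ho1h⟩ := ofact 0 (by omega)
          obtain ⟨ho2Sp, ho2h⟩ := ofact 1 (by omega)
          have hr2c₃ : g₂.q 2 ∉ c₃ := by
            intro h
            rcases mem_insert.1 h with heq | hw'
            · have := g₂.inj 2 (by omega) 3 (by omega) heq; omega
            · exact SpU _ hf2Sp (hwu hw')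
          have hr2hv3 : g₂.q 2 ∈ hv.1 \ c₃ := mem_sdiff.2 ⟨hr2hv, hr2c₃⟩
          have o34 : ∀ j, j = 3 ∨ j = 4 → g₃.q j ∈ vb ∨ g₃.q j ∈ Sp := by
            intro j hj
            have hqc : g₃.q j ∉ c₃ := g₃.notc j (by omega)
            have hqw : g₃.q j ∉ w := fun h => hqc (hwc₃ h)
            have hqu : g₃.q j ∉ u.1 := fun h => by
              have := g₃.xrule j (by omega) (mem_sdiff.2 ⟨h, hqc⟩); omega
            by_cases hqv : g₃.q j ∈ v.1
            · exact Or.inl (memvb _ hqv hqw)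
            · exact Or.inr (memSp _ hqu hqv)
          have ho3h : g₃.q 3 ∉ hv.1 \ c₃ := fun h => by
            have := g₃.yrule 3 (by omega) h; omega
          have ho4h : g₃.q 4 ∉ hv.1 \ c₃ := fun h => by
            have := g₃.yrule 4 (by omega) h; omega
          have hSpcase : ∀ j, j = 3 ∨ j = 4 → g₃.q j ∈ Sp → False := by
            intro j hj hSpj
            have hjne : g₃.q j ∉ hv.1 \ c₃ := by
              rcases hj with rfl | rfl
              · exact ho3h
              · exact ho4h
            have hne1 : g₃.q j ≠ g₃.q 1 := fun h => by
              have := g₃.inj j (by omega) 1 (by omega) h; omega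
            have hne2 : g₃.q j ≠ g₃.q 2 := fun h => by
              have := g₃.inj j (by omega) 2 (by omega) h; omega
            have hner : g₃.q j ≠ g₂.q 2 := fun h => hjne (h ▸ hr2hv3)
            have hne12r : g₃.q 1 ≠ g₂.q 2 := fun h => ho1h (h ▸ hr2hv3)
            have hne22r : g₃.q 2 ≠ g₂.q 2 := fun h => ho2h (h ▸ hr2hv3)
            have hq12' : g₃.q 1 ≠ g₃.q 2 := fun h => by
              have := g₃.inj 1 (by omega) 2 (by omega) h; omega
            have hsub4 : insert (g₃.q j) (insert (g₃.q 1) (insert (g₃.q 2)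
                ({g₂.q 2} : Finset (Fin n)))) ⊆ Sp := by
              intro t ht
              rcases mem_insert.1 ht with rfl | ht
              · exact hSpj
              rcases mem_insert.1 ht with rfl | ht
              · exact ho1Sp
              rcases mem_insert.1 ht with rfl | ht
              · exact ho2Sp
              · rw [mem_singleton.1 ht]; exact hf2Sp
            have hcard4 : (insert (g₃.q j) (insert (g₃.q 1) (insert (g₃.q 2)
                ({g₂.q 2} : Finset (Fin n))))).card = 4 := by
              rw [card_insert_of_notMem (by
                  simp only [mem_insert, mem_singleton]
                  rintro (h | h | h)
                  · exact hne1 h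
                  · exact hne2 h
                  · exact hner h),
                card_insert_of_notMem (by
                  simp only [mem_insert, mem_singleton]
                  rintro (h | h)
                  · exact hq12' h
                  · exact hne12r h),
                card_insert_of_notMem (by
                  simp only [mem_singleton]
                  exact hne22r),
                card_singleton]
            have := card_le_card hsub4
            rw [hcard4, hSpc] at this
            omega
          have ho3vb : g₃.q 3 ∈ vb := by
            rcases o34 3 (Or.inl rfl) with h | h
            · exact h
            · exact (hSpcase 3 (Or.inl rfl) h).elim
          have ho4vb : g₃.q 4 ∈ vb := by
            rcases o34 4 (Or.inr rfl) with h | h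
            · exact h
            · exact (hSpcase 4 (Or.inr rfl) h).elim
          have h3L : 3 < g₃.L := by omega
          set gv := g₃.cv 3 h3L with hgvdef
          have hwgv : w ⊆ gv.1 :=
            fun t ht => mem_insert.2 (Or.inr (mem_insert.2 (Or.inr (hwc₃ ht))))
          have hgvv : d - 1 ≤ (gv.1 ∩ v.1).card := by
            have hsub : insert (g₃.q 3) (insert (g₃.q 4) w) ⊆ gv.1 ∩ v.1 := by
              intro t ht
              rcases mem_insert.1 ht with rfl | ht
              · exact mem_inter.2 ⟨mem_insert_self _ _, vbV _ ho3vb⟩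
              rcases mem_insert.1 ht with rfl | ht
              · exact mem_inter.2 ⟨mem_insert.2 (Or.inr (mem_insert_self _ _)), vbV _ ho4vb⟩
              · exact mem_inter.2 ⟨hwgv ht, hwv ht⟩
            have hc34 : g₃.q 3 ≠ g₃.q 4 := fun h => by
              have := g₃.inj 3 (by omega) 4 (by omega) h; omega
            have := card_le_card hsub
            rw [card_insert_of_notMem (by
                simp only [mem_insert]
                rintro (h | h)
                · exact hc34 h
                · exact vbW _ ho3vb h),
              card_insert_of_notMem (vbW _ ho4vb), hcw] at this
            omega
          have hSWvg : SW d w v gv 1 :=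
            SW.of_close hd hV (by rw [inter_comm]; exact hgvv) hwv hwgv
          have hempty := hA2' gv hwgv (hSWvg.mono_len (by omega))
          have hr3gv : g₂.q 3 ∈ gv.1 ∩ ub := mem_inter.2
            ⟨mem_insert.2 (Or.inr (mem_insert.2 (Or.inr (mem_insert_self _ _)))), hr3ub⟩
          rw [hempty] at hr3gv
          exact notMem_empty _ hr3gv
      · -- q 3 ∈ Sp : contradiction via counting
        exfalso
        have hr3Sp : g₂.q 3 ∈ Sp := memSp _ hr3u hr3v
        have hq13 : g₂.q 1 ≠ g₂.q 3 := fun h => by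
          have := g₂.inj 1 (by omega) 3 (by omega) h; omega
        have hq23 : g₂.q 2 ≠ g₂.q 3 := fun h => by
          have := g₂.inj 2 (by omega) 3 (by omega) h; omega
        -- find σ ∈ (m \ c₂) \ ub ⊆ Sp
        have hmub_le : ((m.1 \ c₂) ∩ ub).card ≤ 1 := by
          have := card_le_card hmub_sub
          omega
        have hsplit : ((m.1 \ c₂) \ ub).card + ((m.1 \ c₂) ∩ ub).card = (m.1 \ c₂).card :=
          card_sdiff_add_card_inter _ _
        have hσne : ((m.1 \ c₂) \ ub).Nonempty := by
          rw [← card_pos]; omega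
        obtain ⟨σ, hσ⟩ := hσne
        obtain ⟨hσm, hσub⟩ := mem_sdiff.1 hσ
        have hσm' : σ ∈ m.1 := (mem_sdiff.1 hσm).1
        have hσc : σ ∉ c₂ := (mem_sdiff.1 hσm).2
        have hσw : σ ∉ w := fun h => hσc (hwc₂ h)
        have hσSp : σ ∈ Sp := by
          refine memSp σ (fun h => hσub (memub σ h hσw)) (fun h => ?_)
          exact hσc (mem_inter.2 ⟨h, hσm'⟩)
        -- Sp = {q1, q2, q3}
        have hsub3 : insert (g₂.q 1) (insert (g₂.q 2) ({g₂.q 3} : Finset (Fin n))) ⊆ Sp := by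
          intro t ht
          rcases mem_insert.1 ht with rfl | ht
          · exact hf1Sp
          · rcases mem_insert.1 ht with rfl | ht
            · exact hf2Sp
            · rw [mem_singleton.1 ht]
              exact hr3Sp
        have hcard3 : (insert (g₂.q 1) (insert (g₂.q 2) ({g₂.q 3} : Finset (Fin n)))).card = 3 := by
          rw [card_insert_of_notMem (by
            simp only [mem_insert, mem_singleton]
            rintro (h | h)
            · exact hq12 h
            · exact hq13 h),
            card_insert_of_notMem (by
              simp only [mem_singleton]
              exact hq23),
            card_singleton]
        have heq3 : insert (g₂.q 1) (insert (g₂.q 2) ({g₂.q 3} : Finset (Fin n))) = Sp :=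
          eq_of_subset_of_card_le hsub3 (by omega)
        have hσmem : σ ∈ insert (g₂.q 1) (insert (g₂.q 2) ({g₂.q 3} : Finset (Fin n))) := by
          rw [heq3]; exact hσSp
        rcases mem_insert.1 hσmem with h | h
        · exact hf1m (h ▸ hσm)
        · rcases mem_insert.1 h with h | h
          · exact hf2m (h ▸ hσm)
          · exact hr3m ((mem_singleton.1 h) ▸ hσm)


  | 4, ih, bridge, hk =>
    by_cases hprev : d ≤ (u.1 ∩ v.1).card + 3
    · exact (ih 3 (by omega) u v hprev).mono_len (by norm_num [Mval])
    have hcw : (u.1 ∩ v.1).card = d - 4 := by omega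
    set w := u.1 ∩ v.1 with hw
    have hd4 : 4 ≤ d := by omega
    set vb := v.1 \ w with hvbdef
    have hvbc : vb.card = 4 := by rw [hvbdef, card_sdiff_of_subset hwv]; omega
    have hSpcard : ((univ : Finset (Fin n)) \ (u.1 ∪ v.1)).card = 2 := by
      have h1 : (u.1 ∪ v.1).card + (u.1 ∩ v.1).card = u.1.card + v.1.card :=
        card_union_add_card_inter _ _
      rw [card_sdiff_of_subset (subset_univ _), card_univ, Fintype.card_fin]
      rw [← hw] at h1
      omega
    obtain ⟨p, hsup⟩ := hV.locally_connected u v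
    have hvbne : (v.1 ∩ vb).Nonempty := by
      have h' : v.1 ∩ vb = vb := inter_eq_right.2 sdiff_subset
      rw [h', ← card_pos, hvbc]; omega
    have hune : u.1 ∩ vb = ∅ := by
      ext t
      simp only [hvbdef, mem_inter, mem_sdiff, notMem_empty, iff_false]
      rintro ⟨h1, h2, h3⟩
      exact h3 (by rw [hw]; exact mem_inter.2 ⟨h1, h2⟩)
    obtain ⟨pm, m, hpmw, hmw, hpmvb, hmvb, hadj, -⟩ := firstmeet hvbne u p hsup hune
    obtain ⟨b, hb⟩ := hmvb
    have hbm : b ∈ m.1 := (mem_inter.1 hb).1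
    have hbvb : b ∈ vb := (mem_inter.1 hb).2
    have hbv : b ∈ v.1 := (mem_sdiff.1 hbvb).1
    have hbw : b ∉ w := (mem_sdiff.1 hbvb).2
    have hmv3 : d ≤ (m.1 ∩ v.1).card + 3 := by
      have hsub : insert b w ⊆ m.1 ∩ v.1 :=
        insert_subset (mem_inter.2 ⟨hbm, hbv⟩) (subset_inter hmw hwv)
      have := card_le_card hsub
      rw [card_insert_of_notMem hbw] at this
      omega
    have tailm : SW d w m v (Mval 3) := bridge 3 (by omega) w m v hmw hwv hmv3
    have hpmdiff : pm.1 \ u.1 ⊆ (univ : Finset (Fin n)) \ (u.1 ∪ v.1) := by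
      intro t ht
      rw [mem_sdiff] at ht ⊢
      refine ⟨mem_univ t, ?_⟩
      rw [mem_union]
      rintro (h1 | h1)
      · exact ht.2 h1
      · have htvb : t ∈ pm.1 ∩ vb :=
          mem_inter.2 ⟨ht.1, mem_sdiff.2 ⟨h1, fun hw' => ht.2 (hwu hw')⟩⟩
        rw [hpmvb] at htvb
        exact notMem_empty _ htvb
    have hpmdc : (pm.1 \ u.1).card ≤ 2 := by
      have := card_le_card hpmdiff
      omega
    have hpmcard := vcard hV pm
    have hpmsplit : (pm.1 \ u.1).card + (pm.1 ∩ u.1).card = pm.1.card :=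
      card_sdiff_add_card_inter _ _
    by_cases hclose : d - 1 ≤ (pm.1 ∩ u.1).card
    · have h1 : SW d w u pm 1 := SW.of_close hd hV (by rwa [inter_comm]) hwu hpmw
      have h2 : SW d w pm m 1 := SW.of_adjP hadj hpmw hmw
      exact ((h1.trans h2).trans tailm).mono_len (by norm_num [Mval])
    · have hcpm : (u.1 ∩ pm.1).card = d - 2 := by
        rw [inter_comm]; omega
      have hwc : w ⊆ u.1 ∩ pm.1 := subset_inter hwu hpmw
      obtain ⟨g⟩ := gadget hd hn hV _ hcpm inter_subset_left inter_subset_right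
        (sdiff_disj u.1 pm.1)
      have hL1 := g.hL1
      have hq1c : g.q 1 ∉ u.1 ∩ pm.1 := g.notc 1 (by omega)
      have hq1u : g.q 1 ∉ u.1 := fun hmem => by
        have := g.xrule 1 (by omega) (mem_sdiff.2 ⟨hmem, hq1c⟩)
        omega
      have hcv0 := GD.walk_pre hd hV hcpm inter_subset_left g 0 (by omega)
      have hq1cv : g.q 1 ∈ (g.cv 0 (by omega)).1 := mem_insert.2 (Or.inr (mem_insert_self _ _))
      have hwcv : w ⊆ (g.cv 0 (by omega)).1 :=
        hwc.trans (fun t ht => mem_insert.2 (Or.inr (mem_insert.2 (Or.inr ht))))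
      by_cases hq1vb : g.q 1 ∈ vb
      · have hq1v : g.q 1 ∈ v.1 := (mem_sdiff.1 hq1vb).1
        have hq1w : g.q 1 ∉ w := (mem_sdiff.1 hq1vb).2
        have hzv : d ≤ ((g.cv 0 (by omega)).1 ∩ v.1).card + 3 := by
          have hsub : insert (g.q 1) w ⊆ (g.cv 0 (by omega)).1 ∩ v.1 :=
            insert_subset (mem_inter.2 ⟨hq1cv, hq1v⟩) (subset_inter hwcv hwv)
          have := card_le_card hsub
          rw [card_insert_of_notMem hq1w] at this
          omega
        have tailz : SW d w (g.cv 0 (by omega)) v (Mval 3) :=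
          bridge 3 (by omega) w _ v hwcv hwv hzv
        have hz' : SW d w u (g.cv 0 (by omega)) 1 := hcv0.mono_w hwc
        exact (hz'.trans tailz).mono_len (by norm_num [Mval])
      · have hq1v : g.q 1 ∉ v.1 := fun hmem =>
          hq1vb (mem_sdiff.2 ⟨hmem, fun hw' => hq1u (hwu hw')⟩)
        have hpmc2 : (pm.1 \ (u.1 ∩ pm.1)).card = 2 := by
          rw [card_sdiff_of_subset inter_subset_right, hcpm, hpmcard]
          omega
        have hpmcSp : pm.1 \ (u.1 ∩ pm.1) ⊆ (univ : Finset (Fin n)) \ (u.1 ∪ v.1) := by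
          intro t ht
          rw [mem_sdiff] at ht ⊢
          refine ⟨mem_univ t, ?_⟩
          rw [mem_union]
          rintro (h1 | h1)
          · exact ht.2 (mem_inter.2 ⟨h1, ht.1⟩)
          · have htvb : t ∈ pm.1 ∩ vb := mem_inter.2 ⟨ht.1,
              mem_sdiff.2 ⟨h1, fun hw' => ht.2 (mem_inter.2 ⟨hwu hw', hpmw hw'⟩)⟩⟩
            rw [hpmvb] at htvb
            exact notMem_empty _ htvb
        have heqSp : pm.1 \ (u.1 ∩ pm.1) = (univ : Finset (Fin n)) \ (u.1 ∪ v.1) :=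
          eq_of_subset_of_card_le hpmcSp (by omega)
        have hq1pm : g.q 1 ∈ pm.1 \ (u.1 ∩ pm.1) := by
          rw [heqSp, mem_sdiff, mem_union]
          exact ⟨mem_univ _, fun h' => h'.elim hq1u hq1v⟩
        have hLeq : (1 : ℕ) = g.L := g.yrule 1 (by omega) hq1pm
        have hfull := GD.walk_full hd hV hcpm inter_subset_left inter_subset_right g
        have h2 : SW d w u pm 2 := (hfull.mono_w hwc).mono_len (by omega)
        have h3 : SW d w pm m 1 := SW.of_adjP hadj hpmw hmw
        exact ((h2.trans h3).trans tailm).mono_len (by norm_num [Mval])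
  | 5, ih, bridge, hk =>
    by_cases hprev : d ≤ (u.1 ∩ v.1).card + 4
    · exact (ih 4 (by omega) u v hprev).mono_len (by norm_num [Mval])
    have hcw : (u.1 ∩ v.1).card = d - 5 := by omega
    set w := u.1 ∩ v.1 with hw
    have hd5 : 5 ≤ d := by omega
    set vb := v.1 \ w with hvbdef
    have hvbc : vb.card = 5 := by rw [hvbdef, card_sdiff_of_subset hwv]; omega
    have hSpcard : ((univ : Finset (Fin n)) \ (u.1 ∪ v.1)).card = 1 := by
      have h1 : (u.1 ∪ v.1).card + (u.1 ∩ v.1).card = u.1.card + v.1.card :=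
        card_union_add_card_inter _ _
      rw [card_sdiff_of_subset (subset_univ _), card_univ, Fintype.card_fin]
      rw [← hw] at h1
      omega
    obtain ⟨p, hsup⟩ := hV.locally_connected u v
    have hvbne : (v.1 ∩ vb).Nonempty := by
      have h' : v.1 ∩ vb = vb := inter_eq_right.2 sdiff_subset
      rw [h', ← card_pos, hvbc]; omega
    have hune : u.1 ∩ vb = ∅ := by
      ext t
      simp only [hvbdef, mem_inter, mem_sdiff, notMem_empty, iff_false]
      rintro ⟨h1, h2, h3⟩
      exact h3 (by rw [hw]; exact mem_inter.2 ⟨h1, h2⟩)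
    obtain ⟨pm, m, hpmw, hmw, hpmvb, hmvb, hadj, -⟩ := firstmeet hvbne u p hsup hune
    obtain ⟨b, hb⟩ := hmvb
    have hbm : b ∈ m.1 := (mem_inter.1 hb).1
    have hbvb : b ∈ vb := (mem_inter.1 hb).2
    have hbv : b ∈ v.1 := (mem_sdiff.1 hbvb).1
    have hbw : b ∉ w := (mem_sdiff.1 hbvb).2
    have hmv4 : d ≤ (m.1 ∩ v.1).card + 4 := by
      have hsub : insert b w ⊆ m.1 ∩ v.1 :=
        insert_subset (mem_inter.2 ⟨hbm, hbv⟩) (subset_inter hmw hwv)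
      have := card_le_card hsub
      rw [card_insert_of_notMem hbw] at this
      omega
    have tailm : SW d w m v (Mval 4) := bridge 4 (by omega) w m v hmw hwv hmv4
    have hpmdiff : pm.1 \ u.1 ⊆ (univ : Finset (Fin n)) \ (u.1 ∪ v.1) := by
      intro t ht
      rw [mem_sdiff] at ht ⊢
      refine ⟨mem_univ t, ?_⟩
      rw [mem_union]
      rintro (h1 | h1)
      · exact ht.2 h1
      · have htvb : t ∈ pm.1 ∩ vb :=
          mem_inter.2 ⟨ht.1, mem_sdiff.2 ⟨h1, fun hw' => ht.2 (hwu hw')⟩⟩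
        rw [hpmvb] at htvb
        exact notMem_empty _ htvb
    have hpmcard := vcard hV pm
    have hpmsplit : (pm.1 \ u.1).card + (pm.1 ∩ u.1).card = pm.1.card :=
      card_sdiff_add_card_inter _ _
    have hpmdc : (pm.1 \ u.1).card ≤ 1 := by
      have := card_le_card hpmdiff
      omega
    have h1 : SW d w u pm 1 := SW.of_close hd hV (by rw [inter_comm]; omega) hwu hpmw
    have h2 : SW d w pm m 1 := SW.of_adjP hadj hpmw hmw
    exact ((h1.trans h2).trans tailm).mono_len (by norm_num [Mval])
  | 6, ih, bridge, hk =>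
    by_cases hprev : d ≤ (u.1 ∩ v.1).card + 5
    · exact (ih 5 (by omega) u v hprev).mono_len (by norm_num [Mval])
    have hcw : (u.1 ∩ v.1).card = d - 6 := by omega
    set w := u.1 ∩ v.1 with hw
    have hd6 : 6 ≤ d := by omega
    set vb := v.1 \ w with hvbdef
    have hvbc : vb.card = 6 := by rw [hvbdef, card_sdiff_of_subset hwv]; omega
    have hSpcard : ((univ : Finset (Fin n)) \ (u.1 ∪ v.1)).card = 0 := by
      have h1 : (u.1 ∪ v.1).card + (u.1 ∩ v.1).card = u.1.card + v.1.card :=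
        card_union_add_card_inter _ _
      rw [card_sdiff_of_subset (subset_univ _), card_univ, Fintype.card_fin]
      rw [← hw] at h1
      omega
    obtain ⟨p, hsup⟩ := hV.locally_connected u v
    have hvbne : (v.1 ∩ vb).Nonempty := by
      have h' : v.1 ∩ vb = vb := inter_eq_right.2 sdiff_subset
      rw [h', ← card_pos, hvbc]; omega
    have hune : u.1 ∩ vb = ∅ := by
      ext t
      simp only [hvbdef, mem_inter, mem_sdiff, notMem_empty, iff_false]
      rintro ⟨h1, h2, h3⟩
      exact h3 (by rw [hw]; exact mem_inter.2 ⟨h1, h2⟩)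
    obtain ⟨pm, m, hpmw, hmw, hpmvb, hmvb, hadj, -⟩ := firstmeet hvbne u p hsup hune
    obtain ⟨b, hb⟩ := hmvb
    have hbm : b ∈ m.1 := (mem_inter.1 hb).1
    have hbvb : b ∈ vb := (mem_inter.1 hb).2
    have hbv : b ∈ v.1 := (mem_sdiff.1 hbvb).1
    have hbw : b ∉ w := (mem_sdiff.1 hbvb).2
    have hmv5 : d ≤ (m.1 ∩ v.1).card + 5 := by
      have hsub : insert b w ⊆ m.1 ∩ v.1 :=
        insert_subset (mem_inter.2 ⟨hbm, hbv⟩) (subset_inter hmw hwv)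
      have := card_le_card hsub
      rw [card_insert_of_notMem hbw] at this
      omega
    have tailm : SW d w m v (Mval 5) := bridge 5 (by omega) w m v hmw hwv hmv5
    -- here pm = u
    have hpmdiff : pm.1 \ u.1 ⊆ (univ : Finset (Fin n)) \ (u.1 ∪ v.1) := by
      intro t ht
      rw [mem_sdiff] at ht ⊢
      refine ⟨mem_univ t, ?_⟩
      rw [mem_union]
      rintro (h1 | h1)
      · exact ht.2 h1
      · have htvb : t ∈ pm.1 ∩ vb :=
          mem_inter.2 ⟨ht.1, mem_sdiff.2 ⟨h1, fun hw' => ht.2 (hwu hw')⟩⟩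
        rw [hpmvb] at htvb
        exact notMem_empty _ htvb
    have hpmcard := vcard hV pm
    have hpmdc : (pm.1 \ u.1).card = 0 := by
      have := card_le_card hpmdiff
      omega
    have hpmu : pm = u := by
      have hsub : pm.1 ⊆ u.1 := by
        intro t ht
        by_contra hcon
        have : t ∈ pm.1 \ u.1 := mem_sdiff.2 ⟨ht, hcon⟩
        rw [card_eq_zero] at hpmdc
        rw [hpmdc] at this
        exact notMem_empty _ this
      exact Subtype.ext (eq_of_subset_of_card_le hsub (by omega))
    rw [hpmu] at hadj
    have h2 : SW d w u m 1 := SW.of_adjP hadj hwu hmw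
    exact (h2.trans tailm).mono_len (by norm_num [Mval])
  | (j+7), ih, bridge, hk =>
    have h6 : d ≤ (u.1 ∩ v.1).card + 6 := inter_card_ge hn hV u v
    have := (ih 6 (by omega) u v h6)
    exact this.mono_len (by simp [Mval])

end DualProof

/-- μ(d, d+6) ≤ 14 for all d ≥ 2. -/
theorem mu_d_dplus6_le (d : ℕ) (hd : 2 ≤ d)
    (V : Finset (Finset (Fin (d + 6)))) (hV : IsDualGraph d (d + 6) V) :
    (adjGraph (d + 6) d V).diam ≤ 14 := by
  have hmain := DualProof.main hd rfl hV 6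
  have hedist : ∀ u v : {u : Finset (Fin (d + 6)) // u ∈ V},
      (adjGraph (d + 6) d V).edist u v ≤ 14 := by
    intro u v
    obtain ⟨p, hl, -⟩ := hmain u v (DualProof.inter_card_ge rfl hV u v)
    have h14 : p.length ≤ 14 := by
      have : DualProof.Mval 6 = 14 := rfl
      omega
    calc (adjGraph (d + 6) d V).edist u v ≤ p.length := SimpleGraph.edist_le p
    _ ≤ 14 := by exact_mod_cast h14
  have hediam : (adjGraph (d + 6) d V).ediam ≤ 14 :=
    SimpleGraph.ediam_le_of_edist_le hedist
  have h := ENat.toNat_le_toNat hediam (by simp)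
  simpa [SimpleGraph.diam] using h
end

section
/- μ(3,6) = 3: every dual graph of type (3,6) has diameter at most 3, and there exists a dual graph of type (3,6) whose diameter is exactly 3. -/
open SimpleGraph

-- key lemma: short walks exist
theorem short_walk {V : Finset (Finset (Fin 6))} (h : IsDualGraph 3 6 V)
    (u v : {x : Finset (Fin 6) // x ∈ V}) :
    ∃ w : (adjGraph 6 3 V).Walk u v, w.length ≤ 3 := by
  classical
  obtain ⟨w0, hw0⟩ := h.locally_connected u v
  let P : ℕ → Prop := fun n => ∃ w : (adjGraph 6 3 V).Walk u v,
    w.length = n ∧ ∀ x ∈ w.support, u.1 ∩ v.1 ⊆ x.1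
  have hP : ∃ n, P n := ⟨w0.length, w0, rfl, hw0⟩
  obtain ⟨w, hwl, hws⟩ : P (Nat.find hP) := Nat.find_spec hP
  by_cases hn : Nat.find hP ≤ 3
  · exact ⟨w, hwl ▸ hn⟩
  exfalso
  push_neg at hn
  -- destructure first two steps
  cases w with
  | nil => simp at hwl; omega
  | @cons _ p₁ _ h₁ w₁ =>
    cases w₁ with
    | nil => simp at hwl; omega
    | @cons _ p₂ _ h₂ w' =>
      simp only [Walk.length_cons] at hwl
      have hmem : ∀ x : {x : Finset (Fin 6) // x ∈ V},
          (x = u ∨ x = p₁ ∨ x ∈ w'.support) → u.1 ∩ v.1 ⊆ x.1 := by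
        intro x hx
        exact hws x (by simpa using hx)
      have hsup' : ∀ x ∈ w'.support, u.1 ∩ v.1 ⊆ x.1 :=
        fun x hx => hmem x (.inr (.inr hx))
      have hmin : ∀ m, m < Nat.find hP → ¬ P m := fun m hm => Nat.find_min hP hm
      have hne : p₂ ≠ u := by
        rintro rfl
        exact hmin w'.length (by omega) ⟨w', rfl, hsup'⟩
      have hnadj : ¬ (adjGraph 6 3 V).Adj u p₂ := by
        intro hadj
        refine hmin (w'.length + 1) (by omega) ⟨Walk.cons hadj w', by simp, ?_⟩
        intro x hx
        simp only [Walk.support_cons, List.mem_cons] at hx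
        rcases hx with rfl | hx
        · exact hmem x (.inl rfl)
        · exact hsup' x hx
      have hnev : p₂ ≠ v := by
        rintro rfl
        refine hmin 2 (by omega) ⟨Walk.cons h₁ (Walk.cons h₂ Walk.nil), by simp, ?_⟩
        intro x hx
        simp only [Walk.support_cons, Walk.support_nil, List.mem_cons,
          List.not_mem_nil, or_false] at hx
        rcases hx with rfl | rfl | rfl
        · exact hmem x (.inl rfl)
        · exact hmem x (.inr (.inl rfl))
        · exact hmem x (.inr (.inr (Walk.start_mem_support w')))
      have hnadjv : ¬ (adjGraph 6 3 V).Adj p₂ v := by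
        intro hadj
        refine hmin 3 (by omega)
          ⟨Walk.cons h₁ (Walk.cons h₂ (Walk.cons hadj Walk.nil)), by simp, ?_⟩
        intro x hx
        simp only [Walk.support_cons, Walk.support_nil, List.mem_cons,
          List.not_mem_nil, or_false] at hx
        rcases hx with rfl | rfl | rfl | rfl
        · exact hmem x (.inl rfl)
        · exact hmem x (.inr (.inl rfl))
        · exact hmem x (.inr (.inr (Walk.start_mem_support w')))
        · exact hmem x (.inr (.inr (Walk.end_mem_support w')))
      -- now the counting argument
      have htp : u.1 ∩ v.1 ⊆ p₂.1 :=
        hmem p₂ (.inr (.inr (Walk.start_mem_support w')))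
      have hcard : ∀ x : {x : Finset (Fin 6) // x ∈ V}, x.1.card = 3 :=
        fun x => h.card_eq x.1 x.2
      -- |p₂ ∩ u| ≤ 1
      have key : ∀ a b : {x : Finset (Fin 6) // x ∈ V}, a ≠ b →
          ¬ (adjGraph 6 3 V).Adj a b → (a.1 ∩ b.1).card ≤ 1 := by
        intro a b hab hnadj
        have h2 : (a.1 ∩ b.1).card ≠ 2 := fun hc => hnadj ⟨hab, hc⟩
        have h3' : (a.1 ∩ b.1).card ≤ 3 := by
          calc (a.1 ∩ b.1).card ≤ a.1.card := Finset.card_le_card Finset.inter_subset_left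
          _ = 3 := hcard a
        have h3 : (a.1 ∩ b.1).card ≠ 3 := by
          intro hc
          apply hab
          have hsub : a.1 ⊆ b.1 := by
            have : a.1 ∩ b.1 = a.1 :=
              Finset.eq_of_subset_of_card_le Finset.inter_subset_left
                (by rw [hc, hcard a])
            rw [← this]; exact Finset.inter_subset_right
          exact Subtype.ext (Finset.eq_of_subset_of_card_le hsub
            (by rw [hcard a, hcard b]))
        omega
      have hau : (p₂.1 ∩ u.1).card ≤ 1 := by
        rw [Finset.inter_comm]
        exact key u p₂ hne.symm hnadj
      have hav : (p₂.1 ∩ v.1).card ≤ 1 := key p₂ v hnev hnadjv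
      have e1 : (p₂.1 ∩ u.1 ∪ p₂.1 ∩ v.1).card + (p₂.1 ∩ u.1 ∩ (p₂.1 ∩ v.1)).card
          = (p₂.1 ∩ u.1).card + (p₂.1 ∩ v.1).card :=
        Finset.card_union_add_card_inter _ _
      have e2 : p₂.1 ∩ u.1 ∪ p₂.1 ∩ v.1 = p₂.1 ∩ (u.1 ∪ v.1) :=
        (Finset.inter_union_distrib_left _ _ _).symm
      have e3 : p₂.1 ∩ u.1 ∩ (p₂.1 ∩ v.1) = u.1 ∩ v.1 := by
        have : p₂.1 ∩ u.1 ∩ (p₂.1 ∩ v.1) = p₂.1 ∩ (u.1 ∩ v.1) := by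
          ext a; simp only [Finset.mem_inter]; tauto
        rw [this, Finset.inter_eq_right.mpr htp]
      have e4 : (p₂.1 ∩ (u.1 ∪ v.1)).card + (p₂.1 \ (u.1 ∪ v.1)).card = 3 := by
        rw [Finset.card_inter_add_card_sdiff, hcard p₂]
      have e5 : (p₂.1 \ (u.1 ∪ v.1)).card ≤ (Finset.univ \ (u.1 ∪ v.1)).card :=
        Finset.card_le_card (Finset.sdiff_subset_sdiff (Finset.subset_univ _) le_rfl)
      have e6 : (Finset.univ \ (u.1 ∪ v.1)).card = 6 - (u.1 ∪ v.1).card := by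
        rw [Finset.card_sdiff_of_subset (Finset.subset_univ _)]
        simp
      have e7 : (u.1 ∪ v.1).card + (u.1 ∩ v.1).card = 6 := by
        rw [Finset.card_union_add_card_inter, hcard u, hcard v]
      rw [e2, e3] at e1
      omega

theorem diam_le_three {V : Finset (Finset (Fin 6))} (h : IsDualGraph 3 6 V) :
    (adjGraph 6 3 V).ediam ≤ 3 := by
  apply ediam_le_of_edist_le
  intro u v
  obtain ⟨w, hw⟩ := short_walk h u v
  calc (adjGraph 6 3 V).edist u v ≤ w.length := Walk.edist_le w
  _ ≤ 3 := by exact_mod_cast hw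

lemma two_step {α : Type*} (G : SimpleGraph α) {u v : α} (p : G.Walk u v)
    (hp : p.length ≤ 2) : u = v ∨ G.Adj u v ∨ ∃ m, G.Adj u m ∧ G.Adj m v := by
  cases p with
  | nil => exact .inl rfl
  | @cons _ b _ h q =>
    cases q with
    | nil => exact .inr (.inl h)
    | @cons _ c _ h' q' =>
      have : q'.length = 0 := by simp [Walk.length_cons] at hp ⊢; omega
      have hcv := Walk.eq_of_length_eq_zero this
      subst hcv
      exact .inr (.inr ⟨b, h, h'⟩)

def V₀ : Finset (Finset (Fin 6)) := {{0,1,5},{0,1,3},{0,2,3},{0,2,4}}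

def t1 : {x : Finset (Fin 6) // x ∈ V₀} := ⟨{0,1,5}, by decide⟩
def t2 : {x : Finset (Fin 6) // x ∈ V₀} := ⟨{0,1,3}, by decide⟩
def t3 : {x : Finset (Fin 6) // x ∈ V₀} := ⟨{0,2,3}, by decide⟩
def t4 : {x : Finset (Fin 6) // x ∈ V₀} := ⟨{0,2,4}, by decide⟩

def e12 : (adjGraph 6 3 V₀).Adj t1 t2 := ⟨by decide, by decide⟩
def e23 : (adjGraph 6 3 V₀).Adj t2 t3 := ⟨by decide, by decide⟩
def e34 : (adjGraph 6 3 V₀).Adj t3 t4 := ⟨by decide, by decide⟩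

def w14 : (adjGraph 6 3 V₀).Walk t1 t4 :=
  Walk.cons e12 (Walk.cons e23 (Walk.cons e34 Walk.nil))

theorem V₀_dual : IsDualGraph 3 6 V₀ := by
  refine ⟨by decide, by decide, ?_⟩
  rintro ⟨x, hx⟩ ⟨y, hy⟩
  fin_cases hx <;> fin_cases hy
  · exact ⟨Walk.nil, by decide⟩
  · exact ⟨Walk.cons e12 Walk.nil, by decide⟩
  · exact ⟨Walk.cons e12 (Walk.cons e23 Walk.nil), by decide⟩
  · exact ⟨w14, by decide⟩
  · exact ⟨Walk.cons ((adjGraph 6 3 V₀).adj_symm e12) Walk.nil, by decide⟩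
  · exact ⟨Walk.nil, by decide⟩
  · exact ⟨Walk.cons e23 Walk.nil, by decide⟩
  · exact ⟨Walk.cons e23 (Walk.cons e34 Walk.nil), by decide⟩
  · exact ⟨Walk.cons ((adjGraph 6 3 V₀).adj_symm e23) (Walk.cons ((adjGraph 6 3 V₀).adj_symm e12) Walk.nil), by decide⟩
  · exact ⟨Walk.cons ((adjGraph 6 3 V₀).adj_symm e23) Walk.nil, by decide⟩
  · exact ⟨Walk.nil, by decide⟩
  · exact ⟨Walk.cons e34 Walk.nil, by decide⟩
  · exact ⟨w14.reverse, by decide⟩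
  · exact ⟨Walk.cons ((adjGraph 6 3 V₀).adj_symm e34) (Walk.cons ((adjGraph 6 3 V₀).adj_symm e23) Walk.nil), by decide⟩
  · exact ⟨Walk.cons ((adjGraph 6 3 V₀).adj_symm e34) Walk.nil, by decide⟩
  · exact ⟨Walk.nil, by decide⟩

theorem V₀_ediam : (adjGraph 6 3 V₀).ediam = 3 := by
  have hub := diam_le_three V₀_dual
  have hle : (adjGraph 6 3 V₀).edist t1 t4 ≤ 3 := by
    calc (adjGraph 6 3 V₀).edist t1 t4 ≤ w14.length := Walk.edist_le w14
    _ ≤ 3 := by norm_num [w14]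
  have hne : (adjGraph 6 3 V₀).edist t1 t4 ≠ ⊤ := fun hc => by simp [hc] at hle
  obtain ⟨k, hk⟩ := WithTop.ne_top_iff_exists.mp hne
  obtain ⟨p, hp⟩ := exists_walk_of_edist_eq_coe hk.symm
  have h3 : 3 ≤ p.length := by
    by_contra hc
    push_neg at hc
    rcases two_step _ p (by omega) with h | h | ⟨⟨m, hm⟩, h1, h2⟩
    · exact absurd h (by decide)
    · exact absurd h (fun ⟨_, hcard⟩ => by revert hcard; decide)
    · have h1c := h1.2
      have h2c := h2.2
      revert h1c h2c
      fin_cases hm <;> decide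
  have hk3 : k = 3 := by
    have h1 := hle
    rw [← hk] at h1
    have h2 : ((k : ℕ) : ℕ∞) ≤ 3 := h1
    have hk3' : k ≤ 3 := by exact_mod_cast h2
    omega
  refine le_antisymm hub ?_
  calc (3 : ℕ∞) = (adjGraph 6 3 V₀).edist t1 t4 := by rw [← hk, hk3]; rfl
  _ ≤ (adjGraph 6 3 V₀).ediam := edist_le_ediam



/-- μ(3,6) = 3. -/
theorem mu_three_six :
    (∀ V : Finset (Finset (Fin 6)), IsDualGraph 3 6 V →
      (adjGraph 6 3 V).diam ≤ 3) ∧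
    (∃ V : Finset (Finset (Fin 6)), IsDualGraph 3 6 V ∧
      (adjGraph 6 3 V).diam = 3) := by
  constructor
  · intro V h
    have hub := diam_le_three h
    have := ENat.toNat_le_toNat hub (by simp : (3 : ℕ∞) ≠ ⊤)
    simpa [SimpleGraph.diam] using this
  · refine ⟨V₀, V₀_dual, ?_⟩
    rw [SimpleGraph.diam, V₀_ediam]
    rfl
end
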